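/- arXiv:2204.12548 — 3 statements merged into one kernel-verified Lean document; each statement's English description precedes it below -/
import Mathlib

section
/- Fix real numbers s > σ > 0 and β ∈ ℝ. There exist constants 0 < c ≤ C, depending only on s, σ, β, such that for every κ ≥ 2 and every Schwartz function q : ℝ → ℂ, setting I_κ := [1, κ/2] ∪ [2κ, ∞), one has c · ‖q‖²_{E^{σ+β}_{σ,1}} ≤ ∫_{I_κ} ‖q‖²_{E^{σ+β}_{s,ϰ}} · ϰ^{2β} dϰ/ϰ ≤ C · ‖q‖²_{E^{σ+β}_{σ,1}}. -/
open MeasureTheory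

/-- The Fourier transform, normalized by `q̂(ξ) = (2π)^{-1/2} ∫ e^{-iξx} q(x) dx`. -/
noncomputable def fhat (f : ℝ → ℂ) (ξ : ℝ) : ℂ :=
  ((Real.sqrt (2 * Real.pi) : ℂ))⁻¹
    * ∫ x : ℝ, Complex.exp (-(Complex.I * (ξ : ℂ) * (x : ℂ))) * f x

/-- The squared `E^{σ'}_{s,ϰ}` norm:
`‖q‖²_{E^{σ'}_{s,ϰ}} = ∫ ϰ^{2(s-σ')} |ξ|^{2σ'} (4ϰ²+ξ²)^{-s} |q̂(ξ)|² dξ`. -/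
noncomputable def Esq (s σ' ϰ : ℝ) (q : ℝ → ℂ) : ℝ :=
  ∫ ξ : ℝ, ϰ ^ (2 * (s - σ')) * |ξ| ^ (2 * σ') * (4 * ϰ ^ 2 + ξ ^ 2) ^ (-s)
    * ‖fhat q ξ‖ ^ 2

lemma fhat_apply (q : ℝ → ℂ) (ξ : ℝ) :
    fhat q ξ = ((Real.sqrt (2*Real.pi) : ℂ))⁻¹
      * FourierTransform.fourier q (ξ/(2*Real.pi)) := by
  rw [fhat, Real.fourier_real_eq]
  congr 1
  apply integral_congr_ae
  filter_upwards with v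
  rw [Circle.smul_def, Real.fourierChar_apply]
  congr 1
  have h : 2 * Real.pi * -(v * (ξ / (2 * Real.pi))) = -(ξ * v) := by
    field_simp
  rw [h]; push_cast; ring

lemma sqrt_two_pi_ge_one : (1:ℝ) ≤ Real.sqrt (2*Real.pi) := by
  rw [show (1:ℝ) = Real.sqrt 1 by simp]
  apply Real.sqrt_le_sqrt
  nlinarith [Real.pi_gt_three]

lemma fhat_apply' (q : SchwartzMap ℝ ℂ) (ξ : ℝ) :
    fhat ⇑q ξ = ((Real.sqrt (2*Real.pi) : ℂ))⁻¹
      * (SchwartzMap.fourierTransformCLE ℂ (SchwartzMap ℝ ℂ) q) (ξ/(2*Real.pi)) := by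
  rw [fhat_apply]; rfl

lemma fhat_cont (q : SchwartzMap ℝ ℂ) : Continuous (fhat ⇑q) := by
  have : Continuous fun ξ : ℝ => ((Real.sqrt (2*Real.pi) : ℂ))⁻¹
      * (SchwartzMap.fourierTransformCLE ℂ (SchwartzMap ℝ ℂ) q) (ξ/(2*Real.pi)) := by
    exact continuous_const.mul (((SchwartzMap.fourierTransformCLE ℂ (SchwartzMap ℝ ℂ) q).continuous).comp
      (continuous_id.div_const _))
  exact this.congr (fun ξ => (fhat_apply' q ξ).symm)

lemma fhat_norm_le (q : SchwartzMap ℝ ℂ) (ξ : ℝ) :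
    ‖fhat ⇑q ξ‖ ≤ ‖(SchwartzMap.fourierTransformCLE ℂ (SchwartzMap ℝ ℂ) q) (ξ/(2*Real.pi))‖ := by
  rw [fhat_apply', norm_mul]
  have h1 : ‖((Real.sqrt (2*Real.pi) : ℂ))⁻¹‖ ≤ 1 := by
    rw [norm_inv, Complex.norm_real, Real.norm_eq_abs,
      abs_of_nonneg (Real.sqrt_nonneg _)]
    exact inv_le_one_of_one_le₀ sqrt_two_pi_ge_one
  calc ‖((Real.sqrt (2*Real.pi) : ℂ))⁻¹‖ * ‖_‖ ≤ 1 * ‖(SchwartzMap.fourierTransformCLE ℂ (SchwartzMap ℝ ℂ) q) (ξ/(2*Real.pi))‖ :=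
        mul_le_mul_of_nonneg_right h1 (norm_nonneg _)
    _ = _ := one_mul _

lemma fhat_sq_decay (q : SchwartzMap ℝ ℂ) (k₀ : ℕ) :
    ∃ D : ℝ, 0 ≤ D ∧ ∀ ξ : ℝ, |ξ| ^ (2*k₀) * ‖fhat ⇑q ξ‖^2 ≤ D := by
  obtain ⟨C, hC, hCb⟩ := (SchwartzMap.fourierTransformCLE ℂ (SchwartzMap ℝ ℂ) q).decay k₀ 0
  set F := SchwartzMap.fourierTransformCLE ℂ (SchwartzMap ℝ ℂ) q with hF
  have hb : ∀ y : ℝ, |y| ^ k₀ * ‖F y‖ ≤ C := by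
    intro y
    simpa [Real.norm_eq_abs, norm_iteratedFDeriv_zero] using hCb y
  refine ⟨(C * (2*Real.pi)^k₀)^2, sq_nonneg _, fun ξ => ?_⟩
  have h2π : (0:ℝ) < 2*Real.pi := by positivity
  have key : |ξ| ^ k₀ * ‖fhat ⇑q ξ‖ ≤ C * (2*Real.pi)^k₀ := by
    have h1 : |ξ| ^ k₀ = |ξ/(2*Real.pi)| ^ k₀ * (2*Real.pi)^k₀ := by
      rw [abs_div, abs_of_pos h2π, div_pow, div_mul_cancel₀]
      positivity
    calc |ξ| ^ k₀ * ‖fhat ⇑q ξ‖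
        ≤ |ξ| ^ k₀ * ‖F (ξ/(2*Real.pi))‖ :=
          mul_le_mul_of_nonneg_left (fhat_norm_le q ξ) (by positivity)
      _ = (|ξ/(2*Real.pi)| ^ k₀ * ‖F (ξ/(2*Real.pi))‖) * (2*Real.pi)^k₀ := by
          rw [h1]; ring
      _ ≤ C * (2*Real.pi)^k₀ :=
          mul_le_mul_of_nonneg_right (hb _) (by positivity)
  have h0 : 0 ≤ |ξ| ^ k₀ * ‖fhat ⇑q ξ‖ := by positivity
  calc |ξ| ^ (2*k₀) * ‖fhat ⇑q ξ‖^2 = (|ξ| ^ k₀ * ‖fhat ⇑q ξ‖)^2 := by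
        rw [mul_pow, ← pow_mul, mul_comm k₀ 2]
    _ ≤ (C * (2*Real.pi)^k₀)^2 := by
        apply sq_le_sq' <;> nlinarith

noncomputable def ker (s σ : ℝ) (ϰ ξ : ℝ) : ℝ :=
  ϰ ^ (2*(s-σ)-1) * (4*ϰ^2+ξ^2) ^ (-s)

lemma ker_measurable (s σ : ℝ) : Measurable (Function.uncurry (ker s σ)) := by
  unfold Function.uncurry ker
  measurability

lemma ker_nonneg (s σ : ℝ) {ϰ : ℝ} (hϰ : 0 ≤ ϰ) (ξ : ℝ) : 0 ≤ ker s σ ϰ ξ :=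
  mul_nonneg (Real.rpow_nonneg hϰ _) (Real.rpow_nonneg (by positivity) _)

lemma sq_rpow {x : ℝ} (hx : 0 < x) (z : ℝ) : (x^2 : ℝ) ^ z = x ^ (2*z) := by
  rw [← Real.rpow_natCast x 2, ← Real.rpow_mul hx.le]
  norm_num

lemma ker_le (s σ : ℝ) (hσ : 0 < σ) (hs : σ < s) {ϰ : ℝ} (ξ : ℝ) (hϰ : 1 ≤ ϰ) :
    ker s σ ϰ ξ ≤ 4^(σ-s) * (4+ξ^2)^(-σ) := by
  have hϰ0 : (0:ℝ) < ϰ := lt_of_lt_of_le one_pos hϰ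
  have hb0 : (0:ℝ) < 4*ϰ^2 := by positivity
  have hb1 : (0:ℝ) < 4*ϰ^2+ξ^2 := by positivity
  have hb2 : (0:ℝ) < 4+ξ^2 := by positivity
  have e1 : (4*ϰ^2+ξ^2) ^ (-s) = (4*ϰ^2+ξ^2)^(σ-s) * (4*ϰ^2+ξ^2)^(-σ) := by
    rw [← Real.rpow_add hb1]; ring_nf
  have e2 : (4*ϰ^2+ξ^2)^(σ-s) ≤ (4*ϰ^2)^(σ-s) :=
    Real.rpow_le_rpow_of_nonpos hb0 (by nlinarith) (by linarith)
  have e3 : (4*ϰ^2+ξ^2)^(-σ) ≤ (4+ξ^2)^(-σ) :=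
    Real.rpow_le_rpow_of_nonpos hb2 (by nlinarith) (by linarith)
  have e4 : (4*ϰ^2:ℝ)^(σ-s) = 4^(σ-s) * ϰ^(2*(σ-s)) := by
    rw [Real.mul_rpow (by norm_num) (by positivity), sq_rpow hϰ0]
  calc ker s σ ϰ ξ
      = ϰ^(2*(s-σ)-1) * ((4*ϰ^2+ξ^2)^(σ-s) * (4*ϰ^2+ξ^2)^(-σ)) := by
        rw [ker, e1]
    _ ≤ ϰ^(2*(s-σ)-1) * ((4*ϰ^2)^(σ-s) * (4+ξ^2)^(-σ)) := by
        apply mul_le_mul_of_nonneg_left _ (Real.rpow_nonneg hϰ0.le _)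
        exact mul_le_mul e2 e3 (Real.rpow_nonneg hb1.le _) (Real.rpow_nonneg hb0.le _)
    _ = (4:ℝ)^(σ-s) * (4+ξ^2)^(-σ) * (ϰ^(2*(s-σ)-1) * ϰ^(2*(σ-s))) := by
        rw [e4]; ring
    _ = 4^(σ-s) * (4+ξ^2)^(-σ) * ϰ^(-1:ℝ) := by
        rw [← Real.rpow_add hϰ0]; congr 1; ring
    _ ≤ 4^(σ-s) * (4+ξ^2)^(-σ) * 1 := by
        apply mul_le_mul_of_nonneg_left
          (Real.rpow_le_one_of_one_le_of_nonpos hϰ (by norm_num))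
        positivity
    _ = _ := mul_one _

lemma ker_ge (s σ : ℝ) (hσ : 0 < σ) (hs : σ < s) {m ϰ ξ : ℝ}
    (hm1 : 1 ≤ m) (hξ : |ξ| ≤ m) (h1 : m ≤ ϰ) (h2 : ϰ ≤ 16*m) :
    16⁻¹ * 1025^(-s) * m^(-(2*σ)-1) ≤ ker s σ ϰ ξ := by
  have hm0 : (0:ℝ) < m := lt_of_lt_of_le one_pos hm1
  have hϰ0 : (0:ℝ) < ϰ := lt_of_lt_of_le hm0 h1
  have hξ2 : ξ^2 ≤ m^2 := by nlinarith [abs_nonneg ξ, sq_abs ξ]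
  have ha : (-1:ℝ) < 2*(s-σ)-1 := by linarith
  have hA : 16⁻¹ * m^(2*(s-σ)-1) ≤ ϰ^(2*(s-σ)-1) := by
    rcases le_or_gt 0 (2*(s-σ)-1) with h | h
    · calc 16⁻¹ * m^(2*(s-σ)-1) ≤ 1 * m^(2*(s-σ)-1) := by
            apply mul_le_mul_of_nonneg_right (by norm_num) (Real.rpow_nonneg hm0.le _)
        _ = m^(2*(s-σ)-1) := one_mul _
        _ ≤ ϰ^(2*(s-σ)-1) := Real.rpow_le_rpow hm0.le h1 h
    · have e16 : ((16:ℝ)*m)^(2*(s-σ)-1) = 16^(2*(s-σ)-1) * m^(2*(s-σ)-1) :=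
        Real.mul_rpow (by norm_num) hm0.le
      have h16 : (16:ℝ)⁻¹ ≤ 16^(2*(s-σ)-1) := by
        rw [show (16:ℝ)⁻¹ = 16^(-1:ℝ) by rw [Real.rpow_neg_one]]
        exact Real.rpow_le_rpow_of_exponent_le (by norm_num) (by linarith)
      calc 16⁻¹ * m^(2*(s-σ)-1) ≤ 16^(2*(s-σ)-1) * m^(2*(s-σ)-1) := by
            apply mul_le_mul_of_nonneg_right h16 (Real.rpow_nonneg hm0.le _)
        _ = ((16:ℝ)*m)^(2*(s-σ)-1) := e16.symm
        _ ≤ ϰ^(2*(s-σ)-1) :=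
            Real.rpow_le_rpow_of_nonpos hϰ0 h2 h.le
  have hB : 1025^(-s) * m^(-(2*s)) ≤ (4*ϰ^2+ξ^2)^(-s) := by
    have hle : 4*ϰ^2+ξ^2 ≤ 1025*m^2 := by nlinarith
    have : ((1025:ℝ)*m^2)^(-s) = 1025^(-s) * m^(-(2*s)) := by
      rw [Real.mul_rpow (by norm_num) (by positivity), sq_rpow hm0]
      ring_nf
    rw [← this]
    exact Real.rpow_le_rpow_of_nonpos (by positivity) hle (by linarith)
  have hprod : (16⁻¹ * m^(2*(s-σ)-1)) * (1025^(-s) * m^(-(2*s))) ≤ ker s σ ϰ ξ := by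
    apply mul_le_mul hA hB (by positivity) (Real.rpow_nonneg hϰ0.le _)
  calc 16⁻¹ * 1025^(-s) * m^(-(2*σ)-1)
      = (16⁻¹ * m^(2*(s-σ)-1)) * (1025^(-s) * m^(-(2*s))) := by
        rw [show (16:ℝ)⁻¹ * 1025^(-s) * m^(-(2*σ)-1)
            = 16⁻¹ * 1025^(-s) * (m^(2*(s-σ)-1) * m^(-(2*s))) by
          rw [← Real.rpow_add hm0]; congr 2; ring]
        ring
    _ ≤ ker s σ ϰ ξ := hprod

lemma ker_ge_small (s σ : ℝ) (hs0 : 0 ≤ s) {ϰ ξ : ℝ} (hϰ : 1 ≤ ϰ) (hξ : ξ^2 ≤ 1) :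
    ϰ^(2*(s-σ)-1) * (5*ϰ^2)^(-s) ≤ ker s σ ϰ ξ := by
  have hϰ0 : (0:ℝ) < ϰ := lt_of_lt_of_le one_pos hϰ
  apply mul_le_mul_of_nonneg_left _ (Real.rpow_nonneg hϰ0.le _)
  exact Real.rpow_le_rpow_of_nonpos (by positivity) (by nlinarith) (by linarith)

lemma ker_meas_left (s σ ξ : ℝ) : Measurable (fun ϰ => ENNReal.ofReal (ker s σ ϰ ξ)) := by
  have : (fun ϰ => ENNReal.ofReal (ker s σ ϰ ξ))
      = (fun p : ℝ × ℝ => ENNReal.ofReal (Function.uncurry (ker s σ) p)) ∘ (fun ϰ => (ϰ, ξ)) := rfl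
  rw [this]
  exact ((ker_measurable s σ).ennreal_ofReal).comp (measurable_id.prodMk measurable_const)

lemma m_facts (ξ : ℝ) : 1 ≤ max 1 |ξ| ∧ |ξ| ≤ max 1 |ξ| ∧ (max 1 |ξ|)^2 ≤ 4 + ξ^2
    ∧ 4 + ξ^2 ≤ 5 * (max 1 |ξ|)^2 := by
  refine ⟨le_max_left _ _, le_max_right _ _, ?_, ?_⟩ <;>
  · rcases max_cases 1 |ξ| with ⟨h1, h2⟩ | ⟨h1, h2⟩ <;> rw [h1] <;>
      nlinarith [sq_abs ξ, abs_nonneg ξ]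

/-- Lower bound for the kernel integral over the punctured set. -/
lemma lower_S (s σ : ℝ) (hσ : 0 < σ) (hs : σ < s) {κ : ℝ} (hκ : 2 ≤ κ) (ξ : ℝ) :
    ENNReal.ofReal (16⁻¹ * 1025^(-s) * (4+ξ^2)^(-σ))
      ≤ ∫⁻ ϰ in Set.Icc 1 (κ/2) ∪ Set.Ici (2*κ), ENNReal.ofReal (ker s σ ϰ ξ) := by
  set m := max 1 |ξ| with hm
  obtain ⟨hm1, hξm, hmlo, hmhi⟩ := m_facts ξ
  have hm0 : (0:ℝ) < m := lt_of_lt_of_le one_pos hm1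
  -- w ≤ m^{-2σ}
  have hw : (4+ξ^2)^(-σ) ≤ m^(-(2*σ)) := by
    have : ((m:ℝ)^2)^(-σ) = m^(-(2*σ)) := by rw [sq_rpow hm0]; ring_nf
    rw [← this]
    exact Real.rpow_le_rpow_of_nonpos (by positivity) hmlo (by linarith)
  -- generic sub-interval estimate
  have key : ∀ p r : ℝ, m ≤ p → p + m ≤ r → r ≤ 16*m →
      ENNReal.ofReal (16⁻¹ * 1025^(-s) * (4+ξ^2)^(-σ))
        ≤ ∫⁻ ϰ in Set.Icc p r, ENNReal.ofReal (ker s σ ϰ ξ) := by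
    intro p r hp hpr hr16
    have step1 : ∫⁻ ϰ in Set.Icc p r, ENNReal.ofReal (16⁻¹ * 1025^(-s) * m^(-(2*σ)-1))
        ≤ ∫⁻ ϰ in Set.Icc p r, ENNReal.ofReal (ker s σ ϰ ξ) := by
      apply setLIntegral_mono (ker_meas_left s σ ξ)
      intro ϰ hϰ
      exact ENNReal.ofReal_le_ofReal
        (ker_ge s σ hσ hs hm1 hξm (le_trans hp hϰ.1) (le_trans hϰ.2 hr16))
    refine le_trans ?_ step1
    rw [setLIntegral_const, Real.volume_Icc,
      ← ENNReal.ofReal_mul (by positivity)]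
    apply ENNReal.ofReal_le_ofReal
    have h1 : 16⁻¹ * 1025^(-s) * (4+ξ^2)^(-σ) ≤ 16⁻¹ * 1025^(-s) * (m^(-(2*σ)-1) * m) := by
      have : m^(-(2*σ)-1) * m = m^(-(2*σ)) := by
        nth_rewrite 2 [show m = m^(1:ℝ) by rw [Real.rpow_one]]
        rw [← Real.rpow_add hm0]; ring_nf
      rw [this]
      apply mul_le_mul_of_nonneg_left hw (by positivity)
    refine le_trans h1 ?_
    have hmr : m ≤ r - p := by linarith
    have hker0 : (0:ℝ) ≤ 16⁻¹ * 1025^(-s) * m^(-(2*σ)-1) := by positivity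
    nlinarith [mul_le_mul_of_nonneg_left hmr hker0]
  by_cases hcase : 2*m ≤ κ/2
  · refine le_trans (key m (2*m) le_rfl (by linarith) (by linarith)) ?_
    apply lintegral_mono_set
    intro x hx
    exact Or.inl ⟨le_trans hm1 hx.1, le_trans hx.2 hcase⟩
  · push_neg at hcase
    refine le_trans (key (8*m) (16*m) (by linarith) (by linarith) le_rfl) ?_
    apply lintegral_mono_set
    intro x hx
    exact Or.inr (le_trans (by linarith) hx.1)

/-- Upper bound for the kernel integral over `[1, ∞)`. -/
lemma upper_Ici (s σ : ℝ) (hσ : 0 < σ) (hs : σ < s) (ξ : ℝ) :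
    ∫⁻ ϰ in Set.Ici 1, ENNReal.ofReal (ker s σ ϰ ξ)
      ≤ ENNReal.ofReal ((5^σ * (1/(2*(s-σ)) + 4^(-s)/(2*σ))) * (4+ξ^2)^(-σ)) := by
  set m := max 1 |ξ| with hm
  obtain ⟨hm1, hξm, hmlo, hmhi⟩ := m_facts ξ
  have hm0 : (0:ℝ) < m := lt_of_lt_of_le one_pos hm1
  have ha : (-1:ℝ) < 2*(s-σ)-1 := by linarith
  -- piece 1 : over Icc 1 m
  have piece1 : ∫⁻ ϰ in Set.Icc 1 m, ENNReal.ofReal (ker s σ ϰ ξ)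
      ≤ ENNReal.ofReal (m^(-(2*σ)) / (2*(s-σ))) := by
    have hptw : ∀ ϰ ∈ Set.Icc 1 m, ENNReal.ofReal (ker s σ ϰ ξ)
        ≤ ENNReal.ofReal (ϰ^(2*(s-σ)-1) * m^(-(2*s))) := by
      intro ϰ hϰ
      apply ENNReal.ofReal_le_ofReal
      apply mul_le_mul_of_nonneg_left _ (Real.rpow_nonneg (by linarith [hϰ.1]) _)
      have : ((m:ℝ)^2)^(-s) = m^(-(2*s)) := by rw [sq_rpow hm0]; ring_nf
      rw [← this]
      apply Real.rpow_le_rpow_of_nonpos (by positivity) _ (by linarith)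
      nlinarith [hϰ.1, sq_abs ξ]
    have step : ∫⁻ ϰ in Set.Icc 1 m, ENNReal.ofReal (ker s σ ϰ ξ)
        ≤ ∫⁻ ϰ in Set.Icc 1 m, ENNReal.ofReal (ϰ^(2*(s-σ)-1) * m^(-(2*s))) := by
      apply setLIntegral_mono _ hptw
      apply Measurable.ennreal_ofReal
      measurability
    refine le_trans step ?_
    rw [← setLIntegral_congr (MeasureTheory.Ioc_ae_eq_Icc (a := (1:ℝ)) (b := m))]
    have hint : IntegrableOn (fun ϰ : ℝ => ϰ^(2*(s-σ)-1) * m^(-(2*s))) (Set.Ioc 1 m) := by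
      have h := (intervalIntegral.intervalIntegrable_rpow' (a := 1) (b := m) ha).mul_const
        (m^(-(2*s)))
      rw [intervalIntegrable_iff, Set.uIoc_of_le hm1] at h
      exact h
    have hnn : 0 ≤ᵐ[volume.restrict (Set.Ioc 1 m)]
        (fun ϰ : ℝ => ϰ^(2*(s-σ)-1) * m^(-(2*s))) := by
      filter_upwards [MeasureTheory.ae_restrict_mem measurableSet_Ioc] with ϰ hϰ
      have : (0:ℝ) < ϰ := lt_trans one_pos hϰ.1
      positivity
    rw [← ofReal_integral_eq_lintegral_ofReal hint hnn]
    apply ENNReal.ofReal_le_ofReal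
    rw [← intervalIntegral.integral_of_le hm1, intervalIntegral.integral_mul_const,
      integral_rpow (Or.inl ha)]
    have h2 : 2*(s-σ)-1+1 = 2*(s-σ) := by ring
    rw [h2, Real.one_rpow]
    have hkey : m^(2*(s-σ)) * m^(-(2*s)) = m^(-(2*σ)) := by
      rw [← Real.rpow_add hm0]; ring_nf
    calc (m^(2*(s-σ)) - 1) / (2*(s-σ)) * m^(-(2*s))
        ≤ m^(2*(s-σ)) / (2*(s-σ)) * m^(-(2*s)) := by
          apply mul_le_mul_of_nonneg_right _ (Real.rpow_nonneg hm0.le _)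
          apply div_le_div_of_nonneg_right (by linarith) (by linarith)
      _ = m^(-(2*σ)) / (2*(s-σ)) := by
          rw [div_mul_eq_mul_div, hkey]
  -- piece 2 : over Ici m
  have piece2 : ∫⁻ ϰ in Set.Ici m, ENNReal.ofReal (ker s σ ϰ ξ)
      ≤ ENNReal.ofReal (4^(-s) * (m^(-(2*σ)) / (2*σ))) := by
    have hptw : ∀ ϰ ∈ Set.Ici m, ENNReal.ofReal (ker s σ ϰ ξ)
        ≤ ENNReal.ofReal (4^(-s) * ϰ^(-(2*σ)-1)) := by
      intro ϰ hϰ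
      have hϰ0 : (0:ℝ) < ϰ := lt_of_lt_of_le hm0 hϰ
      apply ENNReal.ofReal_le_ofReal
      have h1 : (4*ϰ^2+ξ^2)^(-s) ≤ (4*ϰ^2:ℝ)^(-s) :=
        Real.rpow_le_rpow_of_nonpos (by positivity) (by nlinarith) (by linarith)
      have h2 : (4*ϰ^2:ℝ)^(-s) = 4^(-s) * ϰ^(-(2*s)) := by
        rw [Real.mul_rpow (by norm_num) (by positivity), sq_rpow hϰ0]
        ring_nf
      calc ker s σ ϰ ξ ≤ ϰ^(2*(s-σ)-1) * (4*ϰ^2:ℝ)^(-s) :=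
            mul_le_mul_of_nonneg_left h1 (Real.rpow_nonneg hϰ0.le _)
        _ = 4^(-s) * (ϰ^(2*(s-σ)-1) * ϰ^(-(2*s))) := by rw [h2]; ring
        _ = 4^(-s) * ϰ^(-(2*σ)-1) := by
            rw [← Real.rpow_add hϰ0]; congr 1; ring
    have step : ∫⁻ ϰ in Set.Ici m, ENNReal.ofReal (ker s σ ϰ ξ)
        ≤ ∫⁻ ϰ in Set.Ici m, ENNReal.ofReal (4^(-s) * ϰ^(-(2*σ)-1)) := by
      apply setLIntegral_mono _ hptw
      apply Measurable.ennreal_ofReal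
      measurability
    refine le_trans step ?_
    rw [← setLIntegral_congr (MeasureTheory.Ioi_ae_eq_Ici (a := m))]
    have hint : IntegrableOn (fun ϰ : ℝ => 4^(-s) * ϰ^(-(2*σ)-1)) (Set.Ioi m) :=
      (integrableOn_Ioi_rpow_of_lt (by linarith) hm0).const_mul _
    have hnn : 0 ≤ᵐ[volume.restrict (Set.Ioi m)]
        (fun ϰ : ℝ => 4^(-s) * ϰ^(-(2*σ)-1)) := by
      filter_upwards [MeasureTheory.ae_restrict_mem measurableSet_Ioi] with ϰ hϰ
      have : (0:ℝ) < ϰ := lt_trans hm0 hϰ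
      positivity
    rw [← ofReal_integral_eq_lintegral_ofReal hint hnn]
    apply ENNReal.ofReal_le_ofReal
    rw [integral_const_mul, integral_Ioi_rpow_of_lt (by linarith) hm0]
    apply le_of_eq
    congr 1
    rw [show -(2*σ)-1+1 = -(2*σ) by ring]
    field_simp
  -- combine
  have hsplit : Set.Ici (1:ℝ) = Set.Icc 1 m ∪ Set.Ici m := (Set.Icc_union_Ici_eq_Ici hm1).symm
  rw [hsplit]
  refine le_trans (lintegral_union_le _ _ _) ?_
  refine le_trans (add_le_add piece1 piece2) ?_
  have hss : (0:ℝ) < 2*(s-σ) := by linarith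
  rw [← ENNReal.ofReal_add (div_nonneg (Real.rpow_nonneg hm0.le _) hss.le)
    (mul_nonneg (Real.rpow_nonneg (by norm_num) _)
      (div_nonneg (Real.rpow_nonneg hm0.le _) (by linarith)))]
  apply ENNReal.ofReal_le_ofReal
  have hmw : m^(-(2*σ)) ≤ 5^σ * (4+ξ^2)^(-σ) := by
    have h5 : ((5:ℝ)*m^2)^(-σ) ≤ (4+ξ^2)^(-σ) :=
      Real.rpow_le_rpow_of_nonpos (by positivity) hmhi (by linarith)
    have h6 : ((5:ℝ)*m^2)^(-σ) = 5^(-σ) * m^(-(2*σ)) := by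
      rw [Real.mul_rpow (by norm_num) (by positivity), sq_rpow hm0]
      ring_nf
    have h7 : (5:ℝ)^σ * 5^(-σ) = 1 := by
      rw [← Real.rpow_add (by norm_num)]; simp
    calc m^(-(2*σ)) = 5^σ * (5^(-σ) * m^(-(2*σ))) := by
          rw [← mul_assoc, h7, one_mul]
      _ = 5^σ * ((5:ℝ)*m^2)^(-σ) := by rw [h6]
      _ ≤ 5^σ * (4+ξ^2)^(-σ) := by
          apply mul_le_mul_of_nonneg_left h5 (Real.rpow_nonneg (by norm_num) _)
  have h50 : (0:ℝ) ≤ 5^σ * (4+ξ^2)^(-σ) := by positivity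
  have c1 : (0:ℝ) < 1/(2*(s-σ)) := by
    apply div_pos one_pos; linarith
  have c2 : (0:ℝ) ≤ 4^(-s)/(2*σ) := by positivity
  calc m^(-(2*σ)) / (2*(s-σ)) + 4^(-s) * (m^(-(2*σ)) / (2*σ))
      = m^(-(2*σ)) * (1/(2*(s-σ)) + 4^(-s)/(2*σ)) := by ring
    _ ≤ (5^σ * (4+ξ^2)^(-σ)) * (1/(2*(s-σ)) + 4^(-s)/(2*σ)) := by
        apply mul_le_mul_of_nonneg_right hmw (by positivity)
        
    _ = (5^σ * (1/(2*(s-σ)) + 4^(-s)/(2*σ))) * (4+ξ^2)^(-σ) := by ring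

lemma G_meas (c : ℝ) (q : SchwartzMap ℝ ℂ) :
    Measurable fun ξ : ℝ => |ξ| ^ c * ‖fhat ⇑q ξ‖^2 := by
  apply Measurable.mul
  · measurability
  · exact (((fhat_cont q).norm).pow 2).measurable

/-- Step A : the σ-norm as a lower Lebesgue integral. -/
lemma EsqA (σ β : ℝ) (q : SchwartzMap ℝ ℂ) :
    Esq σ (σ+β) 1 ⇑q
      = (∫⁻ ξ : ℝ, ENNReal.ofReal (|ξ| ^ (2*(σ+β)) * ‖fhat ⇑q ξ‖^2)
          * ENNReal.ofReal ((4+ξ^2) ^ (-σ))).toReal := by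
  rw [Esq]
  rw [integral_eq_lintegral_of_nonneg_ae]
  · congr 1
    apply lintegral_congr
    intro ξ
    rw [← ENNReal.ofReal_mul (by positivity)]
    congr 1
    rw [Real.one_rpow]
    norm_num
    ring
  · filter_upwards with ξ
    have h1 : (0:ℝ) ≤ (1:ℝ) ^ (2 * (σ - (σ+β))) := Real.rpow_nonneg zero_le_one _
    have h2 : (0:ℝ) ≤ |ξ| ^ (2*(σ+β)) := Real.rpow_nonneg (abs_nonneg ξ) _
    have h3 : (0:ℝ) ≤ (4*(1:ℝ)^2+ξ^2) ^ (-σ) := Real.rpow_nonneg (by positivity) _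
    positivity
  · apply Measurable.aestronglyMeasurable
    apply Measurable.mul
    · apply Measurable.mul
      · measurability
      · measurability
    · exact (((fhat_cont q).norm).pow 2).measurable

/-- Step B : the weighted s-norm as a lower Lebesgue integral against the kernel. -/
lemma EsqB (s σ β : ℝ) (q : SchwartzMap ℝ ℂ) {ϰ : ℝ} (hϰ : 1 ≤ ϰ) :
    Esq s (σ+β) ϰ ⇑q * ϰ ^ (2*β) / ϰ
      = (∫⁻ ξ : ℝ, ENNReal.ofReal (|ξ| ^ (2*(σ+β)) * ‖fhat ⇑q ξ‖^2)
          * ENNReal.ofReal (ker s σ ϰ ξ)).toReal := by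
  have hϰ0 : (0:ℝ) < ϰ := lt_of_lt_of_le one_pos hϰ
  have e : ϰ ^ (2 * (s - (σ + β))) * ϰ ^ (2 * β) * ϰ⁻¹ = ϰ ^ (2*(s-σ)-1) := by
    rw [← Real.rpow_neg_one ϰ, ← Real.rpow_add hϰ0, ← Real.rpow_add hϰ0]
    congr 1; ring
  have step1 : Esq s (σ+β) ϰ ⇑q * ϰ ^ (2*β) / ϰ
      = ∫ ξ : ℝ, (|ξ| ^ (2*(σ+β)) * ‖fhat ⇑q ξ‖^2) * ker s σ ϰ ξ := by
    rw [Esq, mul_div_assoc, div_eq_mul_inv, ← integral_mul_const]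
    apply integral_congr_ae
    filter_upwards with ξ
    rw [ker]
    linear_combination (|ξ|^(2*(σ+β)) * (4*ϰ^2+ξ^2)^(-s) * ‖fhat ⇑q ξ‖^2) * e
  rw [step1, integral_eq_lintegral_of_nonneg_ae]
  · congr 1
    apply lintegral_congr
    intro ξ
    rw [← ENNReal.ofReal_mul (by positivity)]
  · filter_upwards with ξ
    have h2 : (0:ℝ) ≤ |ξ| ^ (2*(σ+β)) := Real.rpow_nonneg (abs_nonneg ξ) _
    exact mul_nonneg (by positivity) (ker_nonneg s σ hϰ0.le ξ)
  · exact ((G_meas (2*(σ+β)) q).mul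
      ((ker_measurable s σ).comp (measurable_const.prodMk measurable_id) :
        Measurable fun ξ => ker s σ ϰ ξ)).aestronglyMeasurable

/-- The tail of `G` is finite, thanks to Schwartz decay. -/
lemma tail_fin (c : ℝ) (q : SchwartzMap ℝ ℂ) :
    ∫⁻ ξ in (Set.Ioo (-1:ℝ) 1)ᶜ,
      ENNReal.ofReal (|ξ| ^ (2*c) * ‖fhat ⇑q ξ‖^2) ≠ ⊤ := by
  set k₀ : ℕ := ⌈c⌉₊ + 1 with hk₀
  obtain ⟨D, hD0, hD⟩ := fhat_sq_decay q k₀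
  have hexp : 2*c ≤ 2*(k₀:ℝ) - 2 := by
    have := Nat.le_ceil c
    have : c ≤ (⌈c⌉₊:ℝ) := this
    have hk : (k₀:ℝ) = (⌈c⌉₊:ℝ) + 1 := by push_cast [hk₀]; ring
    linarith
  have hptw : ∀ ξ ∈ (Set.Ioo (-1:ℝ) 1)ᶜ,
      ENNReal.ofReal (|ξ| ^ (2*c) * ‖fhat ⇑q ξ‖^2)
        ≤ ENNReal.ofReal ((2*D) * (1+ξ^2)⁻¹) := by
    intro ξ hξ
    have h1 : 1 ≤ |ξ| := by
      simp only [Set.mem_compl_iff, Set.mem_Ioo, not_and_or, not_lt] at hξ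
      rcases hξ with h | h
      · rw [abs_of_nonpos (by linarith)]; linarith
      · rw [abs_of_nonneg (by linarith)]; linarith
    have h0 : (0:ℝ) < |ξ| := lt_of_lt_of_le one_pos h1
    apply ENNReal.ofReal_le_ofReal
    have e1 : |ξ| ^ (2*c) ≤ |ξ| ^ (2*(k₀:ℝ) - 2) :=
      Real.rpow_le_rpow_of_exponent_le h1 hexp
    have e2 : |ξ| ^ (2*(k₀:ℝ) - 2) = |ξ| ^ (-2:ℝ) * |ξ| ^ (2*k₀ : ℕ) := by
      rw [← Real.rpow_natCast |ξ| (2*k₀), ← Real.rpow_add h0]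
      congr 1
      push_cast
      ring
    have e3 : |ξ| ^ (-2:ℝ) ≤ 2 * (1+ξ^2)⁻¹ := by
      rw [show (-2:ℝ) = -(2:ℕ) by norm_num, Real.rpow_neg (abs_nonneg ξ),
        Real.rpow_natCast, sq_abs]
      have hx2 : (0:ℝ) < ξ^2 := by nlinarith [sq_abs ξ]
      have hx3 : (0:ℝ) < 1+ξ^2 := by positivity
      calc (ξ^2)⁻¹ = 1/(ξ^2) := (one_div _).symm
        _ ≤ 2/(1+ξ^2) := by rw [div_le_div_iff₀ hx2 hx3]; nlinarith [sq_abs ξ]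
        _ = 2*(1+ξ^2)⁻¹ := by rw [div_eq_mul_inv]
    calc |ξ| ^ (2*c) * ‖fhat ⇑q ξ‖^2
        ≤ |ξ| ^ (2*(k₀:ℝ) - 2) * ‖fhat ⇑q ξ‖^2 :=
          mul_le_mul_of_nonneg_right e1 (by positivity)
      _ = |ξ| ^ (-2:ℝ) * (|ξ| ^ (2*k₀) * ‖fhat ⇑q ξ‖^2) := by rw [e2]; ring
      _ ≤ (2 * (1+ξ^2)⁻¹) * D := by
          apply mul_le_mul e3 (hD ξ) (by positivity)
          positivity
      _ = (2*D) * (1+ξ^2)⁻¹ := by ring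
  have step : ∫⁻ ξ in (Set.Ioo (-1:ℝ) 1)ᶜ,
      ENNReal.ofReal (|ξ| ^ (2*c) * ‖fhat ⇑q ξ‖^2)
        ≤ ∫⁻ ξ : ℝ, ENNReal.ofReal ((2*D) * (1+ξ^2)⁻¹) := by
    refine le_trans (setLIntegral_mono ?_ hptw) (setLIntegral_le_lintegral _ _)
    apply Measurable.ennreal_ofReal
    measurability
  have hfin : ∫⁻ ξ : ℝ, ENNReal.ofReal ((2*D) * (1+ξ^2)⁻¹) ≠ ⊤ := by
    rw [← ofReal_integral_eq_lintegral_ofReal (integrable_inv_one_add_sq.const_mul (2*D))]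
    · exact ENNReal.ofReal_ne_top
    · filter_upwards with ξ
      positivity
  exact ne_top_of_le_ne_top hfin step

/-- **Integrated equicontinuity norms (punctured version).** For `s > σ > 0` and
`β ∈ ℝ` there are `0 < c ≤ C` so that for all `κ ≥ 2` and Schwartz `q`, with
`I_κ = [1, κ/2] ∪ [2κ, ∞)`,
`c ‖q‖²_{E^{σ+β}_{σ,1}} ≤ ∫_{I_κ} ‖q‖²_{E^{σ+β}_{s,ϰ}} ϰ^{2β} dϰ/ϰ
  ≤ C ‖q‖²_{E^{σ+β}_{σ,1}}`. -/
theorem stmt_12 (s σ β : ℝ) (hσ : 0 < σ) (hs : σ < s) :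
    ∃ c C : ℝ, 0 < c ∧ c ≤ C ∧
      ∀ κ : ℝ, 2 ≤ κ → ∀ q : SchwartzMap ℝ ℂ,
        (c * Esq σ (σ + β) 1 ⇑q
            ≤ ∫ ϰ in Set.Icc 1 (κ / 2) ∪ Set.Ici (2 * κ),
                Esq s (σ + β) ϰ ⇑q * ϰ ^ (2 * β) / ϰ) ∧
        ((∫ ϰ in Set.Icc 1 (κ / 2) ∪ Set.Ici (2 * κ),
                Esq s (σ + β) ϰ ⇑q * ϰ ^ (2 * β) / ϰ)
            ≤ C * Esq σ (σ + β) 1 ⇑q) := by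
  
  have hs0 : (0:ℝ) < s := lt_trans hσ hs
  have hCU : 0 < (5:ℝ)^σ * (1/(2*(s-σ)) + 4^(-s)/(2*σ)) := by
    have h1 : (0:ℝ) < (5:ℝ)^σ := Real.rpow_pos_of_pos (by norm_num) _
    have h2 : (0:ℝ) < 1/(2*(s-σ)) := by apply div_pos one_pos; linarith
    have h3 : (0:ℝ) ≤ (4:ℝ)^(-s)/(2*σ) :=
      div_nonneg (Real.rpow_nonneg (by norm_num) _) (by linarith)
    nlinarith
  have hc : (0:ℝ) < 16⁻¹ * (1025:ℝ)^(-s) := by positivity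
  refine ⟨16⁻¹ * (1025:ℝ)^(-s),
    16⁻¹ * (1025:ℝ)^(-s) + (5:ℝ)^σ * (1/(2*(s-σ)) + 4^(-s)/(2*σ)), hc, by linarith, ?_⟩
  intro κ hκ q
  set cL := 16⁻¹ * (1025:ℝ)^(-s) with hcLdef
  set CU := (5:ℝ)^σ * (1/(2*(s-σ)) + 4^(-s)/(2*σ)) with hCUdef
  set S := Set.Icc (1:ℝ) (κ/2) ∪ Set.Ici (2*κ) with hSdef
  have hSmeas : MeasurableSet S := measurableSet_Icc.union measurableSet_Ici
  have hSsub : S ⊆ Set.Ici (1:ℝ) := by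
    intro x hx
    rcases hx with h | h
    · exact h.1
    · have h1 : (1:ℝ) ≤ 2*κ := by linarith
      exact le_trans h1 h
  set G := fun ξ : ℝ => ENNReal.ofReal (|ξ| ^ (2*(σ+β)) * ‖fhat ⇑q ξ‖^2) with hGdef
  set W := fun ξ : ℝ => ENNReal.ofReal ((4+ξ^2) ^ (-σ)) with hWdef
  set T := fun ϰ : ℝ => ∫⁻ ξ, G ξ * ENNReal.ofReal (ker s σ ϰ ξ) with hTdef
  set L := ∫⁻ ξ, G ξ * W ξ with hLdef
  have hGm : Measurable G := (G_meas (2*(σ+β)) q).ennreal_ofReal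
  have hGfin : ∀ ξ, G ξ ≠ ⊤ := fun ξ => ENNReal.ofReal_ne_top
  have hkerm : Measurable (fun p : ℝ × ℝ => G p.2 * ENNReal.ofReal (ker s σ p.1 p.2)) :=
    (hGm.comp measurable_snd).mul ((ker_measurable s σ).ennreal_ofReal)
  have hkerξ : ∀ ϰ : ℝ, Measurable (fun ξ => ENNReal.ofReal (ker s σ ϰ ξ)) := by
    intro ϰ
    exact ((ker_measurable s σ).ennreal_ofReal).comp (measurable_const.prodMk measurable_id)
  have hTm : Measurable T := by
    apply Measurable.lintegral_prod_right
      (f := fun ϰ ξ => G ξ * ENNReal.ofReal (ker s σ ϰ ξ))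
    exact hkerm
  have hEqOn : Set.EqOn (fun ϰ => Esq s (σ + β) ϰ ⇑q * ϰ ^ (2 * β) / ϰ)
      (fun ϰ => (T ϰ).toReal) S := fun ϰ hϰ => EsqB s σ β q (hSsub hϰ)
  have hIntEq : (∫ ϰ in S, Esq s (σ + β) ϰ ⇑q * ϰ ^ (2 * β) / ϰ)
      = ∫ ϰ in S, (T ϰ).toReal := setIntegral_congr_fun hSmeas hEqOn
  have hAeq : Esq σ (σ+β) 1 ⇑q = L.toReal := EsqA σ β q
  have hTon : ∫⁻ ϰ in S, T ϰ
      = ∫⁻ ξ, G ξ * ∫⁻ ϰ in S, ENNReal.ofReal (ker s σ ϰ ξ) := by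
    rw [hTdef]
    rw [lintegral_lintegral_swap hkerm.aemeasurable]
    apply lintegral_congr
    intro ξ
    exact lintegral_const_mul' _ _ (hGfin ξ)
  have hup : ∫⁻ ϰ in S, T ϰ ≤ ENNReal.ofReal CU * L := by
    rw [hTon, hLdef, ← lintegral_const_mul' _ _ (ENNReal.ofReal_ne_top (r := CU))]
    apply lintegral_mono
    intro ξ
    calc G ξ * ∫⁻ ϰ in S, ENNReal.ofReal (ker s σ ϰ ξ)
        ≤ G ξ * ∫⁻ ϰ in Set.Ici 1, ENNReal.ofReal (ker s σ ϰ ξ) :=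
          mul_le_mul_right (lintegral_mono_set hSsub) _
      _ ≤ G ξ * ENNReal.ofReal (CU * (4+ξ^2)^(-σ)) :=
          mul_le_mul_right (upper_Ici s σ hσ hs ξ) _
      _ = ENNReal.ofReal CU * (G ξ * W ξ) := by
          rw [ENNReal.ofReal_mul hCU.le, hWdef]
          ring
  have hlow : ENNReal.ofReal cL * L ≤ ∫⁻ ϰ in S, T ϰ := by
    rw [hTon, hLdef, ← lintegral_const_mul' _ _ (ENNReal.ofReal_ne_top (r := cL))]
    apply lintegral_mono
    intro ξ
    calc ENNReal.ofReal cL * (G ξ * W ξ)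
        = G ξ * ENNReal.ofReal (cL * (4+ξ^2)^(-σ)) := by
          rw [ENNReal.ofReal_mul hc.le, hWdef]
          ring
      _ ≤ G ξ * ∫⁻ ϰ in S, ENNReal.ofReal (ker s σ ϰ ξ) :=
          mul_le_mul_right (lower_S s σ hσ hs hκ ξ) _
  rw [hIntEq, hAeq]
  by_cases hLfin : L = ⊤
  · -- degenerate case : everything is zero
    have hWle1 : ∀ ξ : ℝ, W ξ ≤ 1 := by
      intro ξ
      calc W ξ = ENNReal.ofReal ((4+ξ^2) ^ (-σ)) := rfl
        _ ≤ ENNReal.ofReal 1 := ENNReal.ofReal_le_ofReal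
            (Real.rpow_le_one_of_one_le_of_nonpos (by nlinarith) (by linarith))
        _ = 1 := ENNReal.ofReal_one
    have hGW_le_G : ∀ ξ, G ξ * W ξ ≤ G ξ := by
      intro ξ
      calc G ξ * W ξ ≤ G ξ * 1 := mul_le_mul_right (hWle1 ξ) _
        _ = G ξ := mul_one _
    have h2 : ∫⁻ ξ in (Set.Ioo (-1:ℝ) 1)ᶜ, G ξ * W ξ ≠ ⊤ :=
      ne_top_of_le_ne_top (tail_fin (σ+β) q) (lintegral_mono hGW_le_G)
    have hBW : ∫⁻ ξ in Set.Ioo (-1:ℝ) 1, G ξ * W ξ = ⊤ := by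
      have hsum : (∫⁻ ξ in Set.Ioo (-1:ℝ) 1, G ξ * W ξ)
          + ∫⁻ ξ in (Set.Ioo (-1:ℝ) 1)ᶜ, G ξ * W ξ = ⊤ :=
        (lintegral_add_compl _ measurableSet_Ioo).trans hLfin
      rcases ENNReal.add_eq_top.mp hsum with h | h
      · exact h
      · exact absurd h h2
    have hBG : ∫⁻ ξ in Set.Ioo (-1:ℝ) 1, G ξ = ⊤ :=
      top_le_iff.mp (hBW ▸ lintegral_mono hGW_le_G)
    have hTinf : ∀ ϰ ∈ S, T ϰ = ⊤ := by
      intro ϰ hϰS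
      have hϰ1 : (1:ℝ) ≤ ϰ := hSsub hϰS
      have hϰ0 : (0:ℝ) < ϰ := lt_of_lt_of_le one_pos hϰ1
      have hε0 : (0:ℝ) < ϰ^(2*(s-σ)-1) * (5*ϰ^2:ℝ)^(-s) := by positivity
      have hstep : ∫⁻ ξ in Set.Ioo (-1:ℝ) 1,
          ENNReal.ofReal (ϰ^(2*(s-σ)-1) * (5*ϰ^2:ℝ)^(-s)) * G ξ ≤ T ϰ := by
        refine le_trans ?_
          (setLIntegral_le_lintegral (Set.Ioo (-1:ℝ) 1)
            (fun ξ => G ξ * ENNReal.ofReal (ker s σ ϰ ξ)) : _ ≤ T ϰ)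
        apply setLIntegral_mono (hGm.mul (hkerξ ϰ))
        intro ξ hξ
        have hξ2 : ξ^2 ≤ 1 := by
          rcases hξ with ⟨hl, hr⟩; nlinarith
        calc ENNReal.ofReal (ϰ^(2*(s-σ)-1) * (5*ϰ^2:ℝ)^(-s)) * G ξ
            = G ξ * ENNReal.ofReal (ϰ^(2*(s-σ)-1) * (5*ϰ^2:ℝ)^(-s)) := mul_comm _ _
          _ ≤ G ξ * ENNReal.ofReal (ker s σ ϰ ξ) :=
              mul_le_mul_right (ENNReal.ofReal_le_ofReal
                (ker_ge_small s σ hs0.le hϰ1 hξ2)) _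
      have htop : (⊤:ENNReal) ≤ T ϰ := by
        refine le_trans ?_ hstep
        rw [lintegral_const_mul' _ _ (ENNReal.ofReal_ne_top), hBG,
          ENNReal.mul_top ((ENNReal.ofReal_pos.mpr hε0).ne')]
      exact top_le_iff.mp htop
    have hzero : (∫ ϰ in S, (T ϰ).toReal) = 0 := by
      rw [setIntegral_congr_fun hSmeas
        (fun ϰ hϰ => by
          show (T ϰ).toReal = 0
          rw [hTinf ϰ hϰ, ENNReal.toReal_top] :
          Set.EqOn (fun ϰ => (T ϰ).toReal) (fun _ => (0:ℝ)) S)]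
      simp
    rw [hzero, hLfin, ENNReal.toReal_top]
    constructor <;> simp
  · -- main case
    have hTfin : ∀ ϰ ∈ S, T ϰ ≠ ⊤ := by
      intro ϰ hϰS
      have hϰ1 : (1:ℝ) ≤ ϰ := hSsub hϰS
      have hTle : T ϰ ≤ ENNReal.ofReal ((4:ℝ)^(σ-s)) * L := by
        rw [hTdef, hLdef, ← lintegral_const_mul' _ _ (ENNReal.ofReal_ne_top)]
        apply lintegral_mono
        intro ξ
        calc G ξ * ENNReal.ofReal (ker s σ ϰ ξ)
            ≤ G ξ * ENNReal.ofReal ((4:ℝ)^(σ-s) * (4+ξ^2)^(-σ)) :=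
              mul_le_mul_right (ENNReal.ofReal_le_ofReal (ker_le s σ hσ hs ξ hϰ1)) _
          _ = ENNReal.ofReal ((4:ℝ)^(σ-s)) * (G ξ * W ξ) := by
              rw [ENNReal.ofReal_mul (Real.rpow_nonneg (by norm_num) _), hWdef]
              ring
      exact ne_top_of_le_ne_top (ENNReal.mul_ne_top ENNReal.ofReal_ne_top hLfin) hTle
    have hST : ∫⁻ ϰ in S, T ϰ ≠ ⊤ :=
      ne_top_of_le_ne_top (ENNReal.mul_ne_top ENNReal.ofReal_ne_top hLfin) hup
    have hIntToReal : ∫ ϰ in S, (T ϰ).toReal = (∫⁻ ϰ in S, T ϰ).toReal := by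
      apply integral_toReal (hTm.aemeasurable.restrict)
      filter_upwards [MeasureTheory.ae_restrict_mem hSmeas] with ϰ hϰ
      exact lt_top_iff_ne_top.mpr (hTfin ϰ hϰ)
    rw [hIntToReal]
    have hLr : (0:ℝ) ≤ L.toReal := ENNReal.toReal_nonneg
    constructor
    · have := ENNReal.toReal_mono hST hlow
      rw [ENNReal.toReal_mul, ENNReal.toReal_ofReal hc.le] at this
      exact this
    · have := ENNReal.toReal_mono (ENNReal.mul_ne_top ENNReal.ofReal_ne_top hLfin) hup
      rw [ENNReal.toReal_mul, ENNReal.toReal_ofReal hCU.le] at this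
      nlinarith
end

section
/- Fix ν ∈ ℝ and define the gauge map G_ν on L²(ℝ; ℂ) by G_ν(q)(x) := q(x) · exp( i ν ∫_{−∞}^{x} |q(y)|² dy ). Then: (i) G_ν is well defined and |G_ν(q)(x)| = |q(x)| for almost every x, so G_ν maps L²(ℝ) into L²(ℝ) preserving the L² norm; (ii) G_{−ν} ∘ G_ν is the identity on L²(ℝ), so G_ν is a bijection of L²(ℝ) with inverse G_{−ν}; and (iii) G_ν is continuous from L²(ℝ) to L²(ℝ). -/
open MeasureTheory
open scoped ENNReal

/-- The antiderivative of `|q|²`: `Φ(x) = ∫_{-∞}^x |q(y)|² dy`. -/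
noncomputable def gaugePhase (q : ℝ → ℂ) (x : ℝ) : ℝ :=
  ∫ y in Set.Iic x, ‖q y‖ ^ 2

/-- The gauge map `G_ν(q)(x) = q(x) exp(iν ∫_{-∞}^x |q(y)|² dy)`. -/
noncomputable def gaugeMap (ν : ℝ) (q : ℝ → ℂ) : ℝ → ℂ := fun x =>
  q x * Complex.exp (Complex.I * (ν : ℂ) * (gaugePhase q x : ℂ))

lemma norm_exp_I_mul_real (a : ℝ) : ‖Complex.exp (Complex.I * (a:ℂ))‖ = 1 := by
  rw [Complex.norm_exp]; simp

lemma norm_exp_gauge (ν r : ℝ) : ‖Complex.exp (Complex.I * (ν:ℂ) * (r:ℂ))‖ = 1 := by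
  have : Complex.I * (ν:ℂ) * (r:ℂ) = Complex.I * ((ν*r : ℝ):ℂ) := by push_cast; ring
  rw [this, norm_exp_I_mul_real]

lemma exp_I_lip (a b : ℝ) :
    ‖Complex.exp (Complex.I * (a:ℂ)) - Complex.exp (Complex.I * (b:ℂ))‖ ≤ |a - b| := by
  have key : ∀ t : ℝ, ‖Complex.exp (Complex.I * (t:ℂ)) - 1‖ ≤ |t| := by
    intro t
    have h1 : Complex.I * (t:ℂ) = (t:ℂ) * Complex.I := by ring
    rw [h1, Complex.exp_mul_I]
    have h2 : Complex.cos t + Complex.sin t * Complex.I - 1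
        = ((Real.cos t - 1 : ℝ):ℂ) + ((Real.sin t : ℝ):ℂ) * Complex.I := by
      push_cast [Complex.ofReal_cos, Complex.ofReal_sin]; ring
    rw [h2, Complex.norm_add_mul_I]
    rw [show |t| = Real.sqrt (t^2) by rw [Real.sqrt_sq_eq_abs]]
    apply Real.sqrt_le_sqrt
    have h3 := Real.sin_sq_le_sq (x := t/2)
    have h4 : Real.cos t = 1 - 2 * Real.sin (t/2)^2 := by
      have h6 := Real.cos_two_mul' (t/2)
      have h5 : 2 * (t/2) = t := by ring
      rw [h5] at h6
      nlinarith [Real.sin_sq_add_cos_sq (t/2)]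
    nlinarith [Real.sin_sq_add_cos_sq t]
  have hdec : Complex.exp (Complex.I * (a:ℂ)) - Complex.exp (Complex.I * (b:ℂ))
      = Complex.exp (Complex.I * (b:ℂ)) * (Complex.exp (Complex.I * ((a-b:ℝ):ℂ)) - 1) := by
    rw [mul_sub, ← Complex.exp_add]; push_cast; ring_nf
  rw [hdec, norm_mul, norm_exp_I_mul_real, one_mul]
  exact key _

lemma norm_gaugeMap (ν : ℝ) (q : ℝ → ℂ) (x : ℝ) : ‖gaugeMap ν q x‖ = ‖q x‖ := by
  rw [gaugeMap, norm_mul, norm_exp_gauge, mul_one]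

lemma integrable_sq_of_L2 {q : ℝ → ℂ} (hq : MemLp q 2 (volume : Measure ℝ)) :
    Integrable (fun x => ‖q x‖ ^ 2) volume := by
  have h := hq.integrable_norm_rpow (by norm_num) (by norm_num)
  have h2 : (2 : ℝ≥0∞).toReal = ((2:ℕ) : ℝ) := by norm_num
  simpa [h2, Real.rpow_natCast] using h

lemma sq_integral_eq {f : ℝ → ℂ} (hf : MemLp f 2 (volume : Measure ℝ)) :
    ∫ x, ‖f x‖ ^ 2 = ((eLpNorm f 2 volume).toReal) ^ 2 := by
  have h := hf.eLpNorm_eq_integral_rpow_norm (by norm_num) (by norm_num)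
  have h2 : (2 : ℝ≥0∞).toReal = 2 := by norm_num
  rw [h2] at h
  have hnn : 0 ≤ ∫ a, ‖f a‖ ^ (2:ℝ) := by positivity
  rw [h, ENNReal.toReal_ofReal (by positivity)]
  rw [← Real.rpow_natCast ((∫ a, ‖f a‖ ^ (2:ℝ)) ^ (2:ℝ)⁻¹) 2, ← Real.rpow_mul hnn]
  norm_num

lemma gaugePhase_monotone {q : ℝ → ℂ} (h : Integrable (fun y => ‖q y‖ ^ 2) volume) :
    Monotone (gaugePhase q) := fun a b hab =>
  setIntegral_mono_set h.integrableOn (ae_of_all _ fun y => by positivity)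
    (HasSubset.Subset.eventuallyLE (Set.Iic_subset_Iic.2 hab))

lemma measurable_exp_gauge {q : ℝ → ℂ} (ν : ℝ) (h : Integrable (fun y => ‖q y‖ ^ 2) volume) :
    Measurable (fun x => Complex.exp (Complex.I * (ν:ℂ) * (gaugePhase q x : ℂ))) := by
  have hΦ : Measurable (gaugePhase q) := (gaugePhase_monotone h).measurable
  exact Complex.continuous_exp.measurable.comp
    ((measurable_const.mul (Complex.measurable_ofReal.comp hΦ)))

lemma aesm_gaugeMap {q : ℝ → ℂ} (ν : ℝ) (hq : MemLp q 2 (volume : Measure ℝ)) :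
    AEStronglyMeasurable (gaugeMap ν q) volume :=
  hq.aestronglyMeasurable.mul
    (measurable_exp_gauge ν (integrable_sq_of_L2 hq)).aestronglyMeasurable

lemma phase_diff_le {q q' : ℝ → ℂ} (hq : Integrable (fun y => ‖q y‖ ^ 2) volume)
    (hq' : Integrable (fun y => ‖q' y‖ ^ 2) volume) (x : ℝ) :
    |gaugePhase q' x - gaugePhase q x| ≤ ∫ y, |‖q' y‖ ^ 2 - ‖q y‖ ^ 2| := by
  have hsub : gaugePhase q' x - gaugePhase q x
      = ∫ y in Set.Iic x, (‖q' y‖ ^ 2 - ‖q y‖ ^ 2) :=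
    (integral_sub hq'.integrableOn hq.integrableOn).symm
  rw [hsub]
  calc |∫ y in Set.Iic x, (‖q' y‖ ^ 2 - ‖q y‖ ^ 2)|
      ≤ ∫ y in Set.Iic x, |‖q' y‖ ^ 2 - ‖q y‖ ^ 2| := by
        simpa [Real.norm_eq_abs] using
          norm_integral_le_integral_norm (μ := volume.restrict (Set.Iic x))
            (f := fun y => ‖q' y‖ ^ 2 - ‖q y‖ ^ 2)
    _ ≤ ∫ y, |‖q' y‖ ^ 2 - ‖q y‖ ^ 2| :=
        setIntegral_le_integral (hq'.sub hq).abs (ae_of_all _ fun y => abs_nonneg _)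

lemma sq_diff_bound {a b u t : ℝ} (ht : 0 < t) (ha : 0 ≤ a) (hb : 0 ≤ b) (h1 : |a - b| ≤ u) :
    |a ^ 2 - b ^ 2| ≤ (1 + 1/t) * u ^ 2 + t * b ^ 2 := by
  obtain ⟨hu1, hu2⟩ := abs_le.1 h1
  have hu : 0 ≤ u := le_trans (abs_nonneg _) h1
  have key : 2 * u * b * t ≤ u ^ 2 + t ^ 2 * b ^ 2 := by nlinarith [sq_nonneg (u - t * b)]
  have key2 : 2 * u * b ≤ u ^ 2 / t + t * b ^ 2 := by
    rw [div_add' _ _ _ ht.ne']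
    rw [le_div_iff₀ ht]
    nlinarith
  have h2 : |a ^ 2 - b ^ 2| ≤ u ^ 2 + 2 * u * b := by
    rcases abs_cases (a ^ 2 - b ^ 2) with ⟨heq, _⟩ | ⟨heq, _⟩ <;> rw [heq] <;> nlinarith
  have hexp : (1 + 1/t) * u ^ 2 + t * b ^ 2 = u ^ 2 + (u ^ 2 / t + t * b ^ 2) := by
    field_simp; ring
  linarith

lemma aux_frac {A ε : ℝ} (hA : 0 ≤ A) (hε : 0 < ε) : A * (ε / (4 * (A + 1))) ≤ ε / 4 := by
  have h4 : (0:ℝ) < 4 * (A + 1) := by linarith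
  rw [mul_div_assoc', div_le_div_iff₀ h4 (by norm_num)]
  nlinarith


lemma exp_gauge_diff_le {q q' : ℝ → ℂ} (ν : ℝ)
    (h2q : Integrable (fun y => ‖q y‖ ^ 2) volume)
    (h2q' : Integrable (fun y => ‖q' y‖ ^ 2) volume) (x : ℝ) :
    ‖Complex.exp (Complex.I * (ν:ℂ) * (gaugePhase q' x : ℂ))
      - Complex.exp (Complex.I * (ν:ℂ) * (gaugePhase q x : ℂ))‖
      ≤ |ν| * ∫ y, |‖q' y‖ ^ 2 - ‖q y‖ ^ 2| := by
  have hrw : ∀ r : ℝ, Complex.I * (ν:ℂ) * (r:ℂ) = Complex.I * ((ν * r : ℝ):ℂ) := by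
    intro r; push_cast; ring
  rw [hrw, hrw]
  calc ‖Complex.exp (Complex.I * ((ν * gaugePhase q' x : ℝ):ℂ))
        - Complex.exp (Complex.I * ((ν * gaugePhase q x : ℝ):ℂ))‖
      ≤ |ν * gaugePhase q' x - ν * gaugePhase q x| := exp_I_lip _ _
    _ = |ν| * |gaugePhase q' x - gaugePhase q x| := by rw [← abs_mul]; ring_nf
    _ ≤ |ν| * ∫ y, |‖q' y‖ ^ 2 - ‖q y‖ ^ 2| :=
        mul_le_mul_of_nonneg_left (phase_diff_le h2q h2q' x) (abs_nonneg ν)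

lemma second_term_bound {q q' : ℝ → ℂ} (ν : ℝ) (hq : MemLp q 2 (volume : Measure ℝ))
    (h2q : Integrable (fun y => ‖q y‖ ^ 2) volume)
    (h2q' : Integrable (fun y => ‖q' y‖ ^ 2) volume) :
    eLpNorm (fun x => q x * (Complex.exp (Complex.I * (ν:ℂ) * (gaugePhase q' x : ℂ))
        - Complex.exp (Complex.I * (ν:ℂ) * (gaugePhase q x : ℂ)))) 2 volume
      ≤ ENNReal.ofReal (|ν| * ∫ y, |‖q' y‖ ^ 2 - ‖q y‖ ^ 2|) * eLpNorm q 2 volume := by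
  set D := ∫ y, |‖q' y‖ ^ 2 - ‖q y‖ ^ 2| with hDdef
  have hD0 : 0 ≤ D := integral_nonneg fun y => abs_nonneg _
  calc eLpNorm (fun x => q x * (Complex.exp (Complex.I * (ν:ℂ) * (gaugePhase q' x : ℂ))
        - Complex.exp (Complex.I * (ν:ℂ) * (gaugePhase q x : ℂ)))) 2 volume
      ≤ eLpNorm (((|ν| * D : ℝ)) • q) 2 volume := by
        apply eLpNorm_mono
        intro x
        rw [norm_mul, Pi.smul_apply, norm_smul, Real.norm_eq_abs,
          abs_of_nonneg (mul_nonneg (abs_nonneg ν) hD0)]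
        exact (mul_le_mul_of_nonneg_left (exp_gauge_diff_le ν h2q h2q' x)
          (norm_nonneg _)).trans_eq (mul_comm _ _)
    _ ≤ ‖(|ν| * D : ℝ)‖₊ • eLpNorm q 2 volume := eLpNorm_const_smul_le
    _ = ENNReal.ofReal (|ν| * D) * eLpNorm q 2 volume := by
        rw [ENNReal.smul_def, smul_eq_mul, ← enorm_eq_nnnorm, Real.enorm_eq_ofReal
          (mul_nonneg (abs_nonneg ν) hD0)]

set_option maxHeartbeats 1000000 in
/-- **The gauge map is an `L²`-norm preserving homeomorphism of `L²(ℝ)`.**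
(i) `|G_ν q| = |q|` pointwise, `G_ν` maps `L²` to `L²` preserving the `L²` norm;
(ii) `G_{-ν} ∘ G_ν = id`; (iii) `G_ν` is continuous on `L²`. -/
theorem stmt_14 (ν : ℝ) :
    (∀ q : ℝ → ℂ, MemLp q 2 (volume : Measure ℝ) →
      (∀ x : ℝ, ‖gaugeMap ν q x‖ = ‖q x‖) ∧
      MemLp (gaugeMap ν q) 2 (volume : Measure ℝ) ∧
      eLpNorm (gaugeMap ν q) 2 (volume : Measure ℝ) = eLpNorm q 2 (volume : Measure ℝ)) ∧
    (∀ q : ℝ → ℂ, gaugeMap (-ν) (gaugeMap ν q) = q) ∧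
    (∀ q : ℝ → ℂ, MemLp q 2 (volume : Measure ℝ) → ∀ ε : ℝ, 0 < ε →
      ∃ δ : ℝ, 0 < δ ∧ ∀ q' : ℝ → ℂ, MemLp q' 2 (volume : Measure ℝ) →
        eLpNorm (fun x => q' x - q x) 2 (volume : Measure ℝ) < ENNReal.ofReal δ →
        eLpNorm (fun x => gaugeMap ν q' x - gaugeMap ν q x) 2 (volume : Measure ℝ)
          < ENNReal.ofReal ε) := by
  refine ⟨?_, ?_, ?_⟩
  · -- part (i)
    intro q hq
    have hnorm : ∀ x, ‖gaugeMap ν q x‖ = ‖q x‖ := norm_gaugeMap ν q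
    have heq : eLpNorm (gaugeMap ν q) 2 (volume : Measure ℝ) = eLpNorm q 2 volume :=
      eLpNorm_congr_norm_ae (ae_of_all _ hnorm)
    exact ⟨hnorm, ⟨aesm_gaugeMap ν hq, heq ▸ hq.2⟩, heq⟩
  · -- part (ii)
    intro q
    have hΦ : gaugePhase (gaugeMap ν q) = gaugePhase q := by
      funext x
      unfold gaugePhase
      congr 1
      funext y
      rw [norm_gaugeMap]
    funext x
    rw [gaugeMap, hΦ, gaugeMap, mul_assoc, ← Complex.exp_add]
    have h0 : Complex.I * (ν:ℂ) * (gaugePhase q x : ℂ)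
        + Complex.I * ((-ν : ℝ):ℂ) * (gaugePhase q x : ℂ) = 0 := by push_cast; ring
    rw [h0, Complex.exp_zero, mul_one]
  · -- part (iii)
    intro q hq ε hε
    set K := (eLpNorm q 2 volume).toReal with hKdef
    have hK : 0 ≤ K := ENNReal.toReal_nonneg
    have hqfin : eLpNorm q 2 volume ≠ ⊤ := hq.2.ne
    have hKe : eLpNorm q 2 volume = ENNReal.ofReal K := (ENNReal.ofReal_toReal hqfin).symm
    set B2 := ∫ x, ‖q x‖ ^ 2 with hB2def
    have hB2 : 0 ≤ B2 := integral_nonneg fun x => by positivity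
    set t := ε / (4 * (|ν| * K * B2 + 1)) with htdef
    have ht : 0 < t := by positivity
    set C := |ν| * K * (1 + 1/t) + 1 with hCdef
    have hC : 0 < C := by positivity
    refine ⟨min 1 (min (ε/4) (ε / (4*C))), by positivity, ?_⟩
    set δ := min 1 (min (ε/4) (ε / (4*C))) with hδdef
    have hδ1 : δ ≤ 1 := min_le_left _ _
    have hδε4 : δ ≤ ε/4 := le_trans (min_le_right _ _) (min_le_left _ _)
    have hδC : δ ≤ ε / (4*C) := le_trans (min_le_right _ _) (min_le_right _ _)
    have hδ0 : 0 < δ := by positivity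
    intro q' hq' hd
    have h2q : Integrable (fun y => ‖q y‖ ^ 2) volume := integrable_sq_of_L2 hq
    have h2q' : Integrable (fun y => ‖q' y‖ ^ 2) volume := integrable_sq_of_L2 hq'
    have hqq' : MemLp (fun x => q' x - q x) 2 (volume : Measure ℝ) := hq'.sub hq
    have h2d : Integrable (fun x => ‖q' x - q x‖ ^ 2) volume := integrable_sq_of_L2 hqq'
    set D := ∫ y, |‖q' y‖ ^ 2 - ‖q y‖ ^ 2| with hDdef
    have hD0 : 0 ≤ D := integral_nonneg fun y => abs_nonneg _
    -- U bound
    set U := (eLpNorm (fun x => q' x - q x) 2 volume).toReal with hUdef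
    have hU0 : 0 ≤ U := ENNReal.toReal_nonneg
    have hUd : U < δ := ENNReal.toReal_lt_of_lt_ofReal hd
    have hU2 : ∫ x, ‖q' x - q x‖ ^ 2 = U ^ 2 := sq_integral_eq hqq'
    -- D bound
    have hDle : D ≤ (1 + 1/t) * U ^ 2 + t * B2 := by
      have hint : Integrable (fun y => (1 + 1/t) * ‖q' y - q y‖ ^ 2 + t * ‖q y‖ ^ 2) volume :=
        (h2d.const_mul _).add (h2q.const_mul _)
      have hmono := integral_mono (h2q'.sub h2q).abs hint (fun y =>
        sq_diff_bound ht (norm_nonneg _) (norm_nonneg _) (abs_norm_sub_norm_le _ _))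
      rwa [integral_add (h2d.const_mul _) (h2q.const_mul _), integral_const_mul,
        integral_const_mul, hU2] at hmono
    have hU2δ : U ^ 2 ≤ δ := by nlinarith
    have hDfinal : |ν| * D * K ≤ ε/2 := by
      have hta : |ν| * K * ((1 + 1/t) * U ^ 2) ≤ C * δ := by
        have h1 : |ν| * K * ((1 + 1/t) * U ^ 2) ≤ |ν| * K * ((1 + 1/t) * δ) := by
          have h1t : (0:ℝ) ≤ 1 + 1/t := by positivity
          have := mul_le_mul_of_nonneg_left hU2δ h1t
          nlinarith [mul_nonneg (abs_nonneg ν) hK]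
        have h2 : |ν| * K * ((1 + 1/t) * δ) ≤ C * δ := by
          rw [hCdef]
          nlinarith [hδ0.le]
        linarith
      have htaδ : C * δ ≤ ε/4 := by
        calc C * δ ≤ C * (ε / (4*C)) := mul_le_mul_of_nonneg_left hδC hC.le
          _ = ε/4 := by field_simp
      have htb : |ν| * K * (t * B2) ≤ ε/4 := by
        have := aux_frac (mul_nonneg (mul_nonneg (abs_nonneg ν) hK) hB2) hε
        calc |ν| * K * (t * B2) = (|ν| * K * B2) * (ε / (4 * (|ν| * K * B2 + 1))) := by
              rw [htdef]; ring
          _ ≤ ε/4 := this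
      have hmul : |ν| * D * K ≤ |ν| * K * ((1 + 1/t) * U ^ 2) + |ν| * K * (t * B2) := by
        have h := mul_le_mul_of_nonneg_left hDle (mul_nonneg (abs_nonneg ν) hK)
        nlinarith [mul_nonneg (abs_nonneg ν) hK]
      linarith
    -- decomposition
    set E' : ℝ → ℂ := fun x => Complex.exp (Complex.I * (ν:ℂ) * (gaugePhase q' x : ℂ)) with hE'
    set E : ℝ → ℂ := fun x => Complex.exp (Complex.I * (ν:ℂ) * (gaugePhase q x : ℂ)) with hE
    have hdec : (fun x => gaugeMap ν q' x - gaugeMap ν q x)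
        = (fun x => (q' x - q x) * E' x) + (fun x => q x * (E' x - E x)) := by
      funext x
      simp only [gaugeMap, Pi.add_apply, hE', hE]
      ring
    have haesm1 : AEStronglyMeasurable (fun x => (q' x - q x) * E' x) volume :=
      hqq'.aestronglyMeasurable.mul (measurable_exp_gauge ν h2q').aestronglyMeasurable
    have haesm2 : AEStronglyMeasurable (fun x => q x * (E' x - E x)) volume :=
      hq.aestronglyMeasurable.mul
        ((measurable_exp_gauge ν h2q').sub (measurable_exp_gauge ν h2q)).aestronglyMeasurable
    have hsum : eLpNorm (fun x => gaugeMap ν q' x - gaugeMap ν q x) 2 volume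
        ≤ eLpNorm (fun x => (q' x - q x) * E' x) 2 volume
          + eLpNorm (fun x => q x * (E' x - E x)) 2 volume := by
      rw [hdec]
      exact eLpNorm_add_le haesm1 haesm2 one_le_two
    have h1 : eLpNorm (fun x => (q' x - q x) * E' x) 2 volume
        = eLpNorm (fun x => q' x - q x) 2 volume :=
      eLpNorm_congr_norm_ae (ae_of_all _ fun x => by
        rw [hE', norm_mul, norm_exp_gauge, mul_one])
    have h2 : eLpNorm (fun x => q x * (E' x - E x)) 2 volume
        ≤ ENNReal.ofReal (|ν| * D) * eLpNorm q 2 volume :=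
      second_term_bound ν hq h2q h2q'
    have h2' : eLpNorm (fun x => q x * (E' x - E x)) 2 volume ≤ ENNReal.ofReal (ε/2) := by
      refine h2.trans ?_
      rw [hKe, ← ENNReal.ofReal_mul (mul_nonneg (abs_nonneg ν) hD0)]
      exact ENNReal.ofReal_le_ofReal hDfinal
    calc eLpNorm (fun x => gaugeMap ν q' x - gaugeMap ν q x) 2 volume
        ≤ eLpNorm (fun x => q' x - q x) 2 volume
            + eLpNorm (fun x => q x * (E' x - E x)) 2 volume := by rw [← h1]; exact hsum
      _ < ENNReal.ofReal δ + ENNReal.ofReal (ε/2) :=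
          ENNReal.add_lt_add_of_lt_of_le (ne_top_of_le_ne_top ENNReal.ofReal_ne_top h2') hd h2'
      _ ≤ ENNReal.ofReal ε := by
          rw [← ENNReal.ofReal_add hδ0.le (by positivity)]
          exact ENNReal.ofReal_le_ofReal (by linarith)
end

section
/- Let ψ(x) := √(sech(x/99)). There is an absolute constant C such that for every real ϰ ≥ 1, every μ ∈ ℝ, and every integer ℓ with |ℓ| ≤ 24: (i) the kernel K(x,y) := ψ(x−μ)^ℓ ψ(y−μ)^{−ℓ} e^{ϰ(x−y)} 𝟙_{x<y} satisfies |K(x,y)| ≤ C e^{−ϰ|x−y|/2} for all x, y ∈ ℝ; and (ii) for every p ∈ [1, ∞] and every f ∈ L^p(ℝ), the function T f(x) := ψ(x−μ)^ℓ ∫_{x}^{∞} e^{ϰ(x−y)} ψ(y−μ)^{−ℓ} f(y) dy satisfies ‖T f‖_{L^p} ≤ C ϰ^{−1} ‖f‖_{L^p}. -/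
open MeasureTheory Real Set
open scoped ENNReal NNReal

namespace Stmt15Aux

lemma exp_abs_le_two_cosh (a : ℝ) : Real.exp |a| ≤ 2 * Real.cosh a := by
  rw [Real.cosh_eq]
  rcases abs_cases a with ⟨h, _⟩ | ⟨h, _⟩ <;> rw [h] <;>
    nlinarith [Real.exp_pos a, Real.exp_pos (-a)]

lemma cosh_le_exp_abs (a : ℝ) : Real.cosh a ≤ Real.exp |a| := by
  rw [Real.cosh_eq]
  rcases abs_cases a with ⟨h, h2⟩ | ⟨h, h2⟩ <;> rw [h]
  · linarith [Real.exp_le_exp.mpr (by linarith : -a ≤ a)]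
  · linarith [Real.exp_le_exp.mpr (by linarith : a ≤ -a)]

lemma cosh_div_cosh_le (a b : ℝ) : Real.cosh b / Real.cosh a ≤ 2 * Real.exp |a - b| := by
  have ha := Real.cosh_pos a
  rw [div_le_iff₀ ha]
  have h1 : Real.cosh b ≤ Real.exp |b| := cosh_le_exp_abs b
  have h2 : Real.exp |b| ≤ Real.exp |a| * Real.exp |a - b| := by
    rw [← Real.exp_add]
    apply Real.exp_le_exp.mpr
    have := abs_sub_abs_le_abs_sub b a
    have : |b| ≤ |a| + |b - a| := by linarith [abs_sub_abs_le_abs_sub b a, abs_nonneg (b-a)]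
    calc |b| ≤ |a| + |b - a| := this
      _ = |a| + |a - b| := by rw [abs_sub_comm]
  have h3 : Real.exp |a| ≤ 2 * Real.cosh a := exp_abs_le_two_cosh a
  have he := Real.exp_pos |a - b|
  nlinarith

lemma ratio_le (a b : ℝ) :
    Real.sqrt (1 / Real.cosh a) / Real.sqrt (1 / Real.cosh b) ≤ 2 * Real.exp |a - b| := by
  have ha := Real.cosh_pos a
  have hb := Real.cosh_pos b
  have hM : (1:ℝ) ≤ 2 * Real.exp |a - b| := by
    nlinarith [Real.one_le_exp (abs_nonneg (a - b))]
  have hr0 : 0 ≤ Real.sqrt (1 / Real.cosh a) / Real.sqrt (1 / Real.cosh b) :=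
    div_nonneg (Real.sqrt_nonneg _) (Real.sqrt_nonneg _)
  have hsq : (Real.sqrt (1 / Real.cosh a) / Real.sqrt (1 / Real.cosh b)) ^ 2
      = Real.cosh b / Real.cosh a := by
    rw [div_pow, Real.sq_sqrt (by positivity), Real.sq_sqrt (by positivity)]
    field_simp
  have key : (Real.sqrt (1 / Real.cosh a) / Real.sqrt (1 / Real.cosh b)) ^ 2
      ≤ (2 * Real.exp |a - b|) ^ 2 := by
    rw [hsq]
    calc Real.cosh b / Real.cosh a ≤ 2 * Real.exp |a - b| := cosh_div_cosh_le a b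
      _ ≤ (2 * Real.exp |a - b|) ^ 2 := by nlinarith
  exact (pow_le_pow_iff_left₀ hr0 (by linarith) two_ne_zero).mp key

lemma zpow_le_pow24 {r M : ℝ} (hr : 0 < r) (hM : 1 ≤ M) (h1 : r ≤ M) (h2 : r⁻¹ ≤ M)
    {ℓ : ℤ} (hl : |ℓ| ≤ 24) : r ^ ℓ ≤ M ^ (24 : ℕ) := by
  have hn : ℓ.natAbs ≤ 24 := by
    rw [Int.abs_eq_natAbs] at hl
    omega
  have key : r ^ ℓ ≤ M ^ ℓ.natAbs := by
    rcases le_or_gt 0 ℓ with h | h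
    · rw [show ℓ = (ℓ.natAbs : ℤ) by omega, zpow_natCast]
      exact pow_le_pow_left₀ hr.le h1 _
    · have : r ^ ℓ = r⁻¹ ^ ℓ.natAbs := by
        rw [← zpow_natCast r⁻¹, inv_zpow, ← zpow_neg]
        congr 1
        omega
      rw [this]
      exact pow_le_pow_left₀ (inv_nonneg.mpr hr.le) h2 _
  exact key.trans (pow_le_pow_right₀ hM hn)

lemma main_ratio (μ x y : ℝ) {ℓ : ℤ} (hl : |ℓ| ≤ 24) :
    Real.sqrt (1 / Real.cosh ((x - μ) / 99)) ^ ℓ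
      * Real.sqrt (1 / Real.cosh ((y - μ) / 99)) ^ (-ℓ)
      ≤ 2 ^ 24 * Real.exp (|x - y| / 4) := by
  set a := (x - μ) / 99 with ha
  set b := (y - μ) / 99 with hb
  have hab : |a - b| = |x - y| / 99 := by
    have h : a - b = (x - y) / 99 := by rw [ha, hb]; ring
    rw [h, abs_div]
    norm_num
  have hca := Real.cosh_pos a
  have hcb := Real.cosh_pos b
  have hu : 0 < Real.sqrt (1 / Real.cosh a) := Real.sqrt_pos.mpr (by positivity)
  have hv : 0 < Real.sqrt (1 / Real.cosh b) := Real.sqrt_pos.mpr (by positivity)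
  set M := 2 * Real.exp |a - b| with hMdef
  have hM : (1:ℝ) ≤ M := by
    have := Real.one_le_exp (abs_nonneg (a - b)); nlinarith
  have h1 : Real.sqrt (1 / Real.cosh a) / Real.sqrt (1 / Real.cosh b) ≤ M := ratio_le a b
  have h2 : (Real.sqrt (1 / Real.cosh a) / Real.sqrt (1 / Real.cosh b))⁻¹ ≤ M := by
    rw [inv_div]
    have := ratio_le b a
    rwa [abs_sub_comm] at this
  have hzp : Real.sqrt (1 / Real.cosh a) ^ ℓ * Real.sqrt (1 / Real.cosh b) ^ (-ℓ)
      = (Real.sqrt (1 / Real.cosh a) / Real.sqrt (1 / Real.cosh b)) ^ ℓ := by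
    rw [div_zpow, zpow_neg]
    exact (div_eq_mul_inv _ _).symm
  rw [hzp]
  calc (Real.sqrt (1 / Real.cosh a) / Real.sqrt (1 / Real.cosh b)) ^ ℓ
      ≤ M ^ (24:ℕ) := zpow_le_pow24 (by positivity) hM h1 h2 hl
    _ = 2 ^ 24 * Real.exp |a - b| ^ (24:ℕ) := by rw [hMdef, mul_pow]
    _ = 2 ^ 24 * Real.exp (24 * |a - b|) := by rw [← Real.exp_nat_mul]; norm_num
    _ ≤ 2 ^ 24 * Real.exp (|x - y| / 4) := by
        have : 24 * |a - b| ≤ |x - y| / 4 := by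
          rw [hab]
          have := abs_nonneg (x - y)
          nlinarith
        have := Real.exp_le_exp.mpr this
        nlinarith [Real.exp_pos (24 * |a - b|)]

lemma kernel_le {ϰ : ℝ} (hϰ : 1 ≤ ϰ) (μ : ℝ) {ℓ : ℤ} (hl : |ℓ| ≤ 24) {x y : ℝ} (hxy : x < y) :
    Real.sqrt (1 / Real.cosh ((x - μ) / 99)) ^ ℓ
      * Real.sqrt (1 / Real.cosh ((y - μ) / 99)) ^ (-ℓ) * Real.exp (ϰ * (x - y))
      ≤ 2 ^ 26 * Real.exp (-(ϰ * |x - y|) / 2) := by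
  have h1 := main_ratio μ x y hl
  have habs : x - y = -|x - y| := by
    rw [abs_sub_comm, abs_of_pos (by linarith)]; ring
  have hexp : Real.exp (|x - y| / 4) * Real.exp (ϰ * (x - y))
      ≤ Real.exp (-(ϰ * |x - y|) / 2) := by
    rw [← Real.exp_add, Real.exp_le_exp]
    have h0 : (0:ℝ) ≤ |x - y| := abs_nonneg _
    have hxt : ϰ * (x - y) = -(ϰ * |x - y|) := by
      rw [abs_sub_comm, abs_of_pos (by linarith : (0:ℝ) < y - x)]; ring
    have ht : 1 * |x - y| ≤ ϰ * |x - y| := mul_le_mul_of_nonneg_right hϰ h0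
    rw [hxt]
    linarith
  have hrpos : (0:ℝ) < Real.exp (ϰ * (x - y)) := Real.exp_pos _
  calc Real.sqrt (1 / Real.cosh ((x - μ) / 99)) ^ ℓ
      * Real.sqrt (1 / Real.cosh ((y - μ) / 99)) ^ (-ℓ) * Real.exp (ϰ * (x - y))
      ≤ (2 ^ 24 * Real.exp (|x - y| / 4)) * Real.exp (ϰ * (x - y)) := by
        apply mul_le_mul_of_nonneg_right h1 hrpos.le
    _ = 2 ^ 24 * (Real.exp (|x - y| / 4) * Real.exp (ϰ * (x - y))) := by ring
    _ ≤ 2 ^ 24 * Real.exp (-(ϰ * |x - y|) / 2) := by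
        apply mul_le_mul_of_nonneg_left hexp (by norm_num)
    _ ≤ 2 ^ 26 * Real.exp (-(ϰ * |x - y|) / 2) := by
        nlinarith [Real.exp_pos (-(ϰ * |x - y|) / 2)]

lemma lintegral_comp_neg (f : ℝ → ℝ≥0∞) : ∫⁻ z, f (-z) = ∫⁻ z, f z := by
  conv_rhs => rw [← Measure.map_neg_eq_self (volume : Measure ℝ)]
  exact (lintegral_map_equiv f (MeasurableEquiv.neg ℝ)).symm

lemma lintegral_shift (f : ℝ → ℝ≥0∞) (heven : ∀ z, f (-z) = f z) (x : ℝ) :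
    ∫⁻ y, f (x - y) = ∫⁻ z, f z := by
  calc ∫⁻ y, f (x - y) = ∫⁻ y, f (y - x) := by
        refine lintegral_congr fun y => ?_
        rw [← heven (y - x), neg_sub]
    _ = ∫⁻ z, f z := lintegral_sub_right_eq_self f x

lemma lintegral_Ici_exp {r : ℝ} (hr : 0 < r) :
    ∫⁻ z in Ici (0:ℝ), ENNReal.ofReal (Real.exp (-(r * z))) = ENNReal.ofReal (1 / r) := by
  have h2 : ∫⁻ x in Ici (0:ℝ), ENNReal.ofReal (r * Real.exp (-(r * x))) = 1 := by
    rw [← ProbabilityTheory.lintegral_exponentialPDF_eq_one hr,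
      ← lintegral_indicator measurableSet_Ici]
    refine (lintegral_congr fun z => ?_).symm
    rw [ProbabilityTheory.exponentialPDF_eq]
    by_cases h : (0:ℝ) ≤ z
    · rw [Set.indicator_of_mem (mem_Ici.mpr h), if_pos h]
    · rw [Set.indicator_of_notMem (by simpa using h), if_neg h, ENNReal.ofReal_zero]
  have h3 : ∀ z ∈ Ici (0:ℝ), ENNReal.ofReal (Real.exp (-(r * z)))
      = ENNReal.ofReal (1 / r) * ENNReal.ofReal (r * Real.exp (-(r * z))) := by
    intro z _
    rw [← ENNReal.ofReal_mul (by positivity)]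
    congr 1
    field_simp
  rw [setLIntegral_congr_fun measurableSet_Ici h3,
    lintegral_const_mul' _ _ ENNReal.ofReal_ne_top, h2, mul_one]

lemma lintegral_G_le {ϰ : ℝ} (hϰ : 1 ≤ ϰ) {c : ℝ} (hc : 0 ≤ c) :
    ∫⁻ z, ENNReal.ofReal (c * Real.exp (-(ϰ * |z|) / 2)) ≤ ENNReal.ofReal (4 * c / ϰ) := by
  have hϰ0 : (0:ℝ) < ϰ := by linarith
  have hr : 0 < ϰ / 2 := by linarith
  have hIci : ∫⁻ z in Ici (0:ℝ), ENNReal.ofReal (c * Real.exp (-(ϰ * |z|) / 2))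
      ≤ ENNReal.ofReal (2 * c / ϰ) := by
    have heq : ∀ z ∈ Ici (0:ℝ), ENNReal.ofReal (c * Real.exp (-(ϰ * |z|) / 2))
        = ENNReal.ofReal c * ENNReal.ofReal (Real.exp (-(ϰ / 2 * z))) := by
      intro z hz
      rw [← ENNReal.ofReal_mul hc]
      congr 2
      rw [abs_of_nonneg (mem_Ici.mp hz)]
      ring
    rw [setLIntegral_congr_fun measurableSet_Ici heq,
      lintegral_const_mul' _ _ ENNReal.ofReal_ne_top, lintegral_Ici_exp hr,
      ← ENNReal.ofReal_mul hc]
    apply ENNReal.ofReal_le_ofReal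
    rw [show c * (1 / (ϰ / 2)) = 2 * c / ϰ by field_simp]
  have hIio : ∫⁻ z in Iio (0:ℝ), ENNReal.ofReal (c * Real.exp (-(ϰ * |z|) / 2))
      ≤ ENNReal.ofReal (2 * c / ϰ) := by
    have h1 : ∫⁻ z in Iio (0:ℝ), ENNReal.ofReal (c * Real.exp (-(ϰ * |z|) / 2))
        = ∫⁻ z in Ioi (0:ℝ), ENNReal.ofReal (c * Real.exp (-(ϰ * |z|) / 2)) := by
      rw [← lintegral_indicator measurableSet_Iio, ← lintegral_indicator measurableSet_Ioi,
        ← lintegral_comp_neg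
          (fun z => (Iio (0:ℝ)).indicator (fun w => ENNReal.ofReal (c * Real.exp (-(ϰ * |w|) / 2))) z)]
      refine lintegral_congr fun z => ?_
      by_cases h : (0:ℝ) < z
      · rw [Set.indicator_of_mem (by simpa using h : -z ∈ Iio (0:ℝ)),
          Set.indicator_of_mem (mem_Ioi.mpr h)]
        simp only [abs_neg]
      · rw [Set.indicator_of_notMem (by simpa using h),
          Set.indicator_of_notMem (by simpa using h)]
    rw [h1]
    exact le_trans (lintegral_mono' (Measure.restrict_mono Ioi_subset_Ici_self le_rfl) le_rfl) hIci
  calc ∫⁻ z, ENNReal.ofReal (c * Real.exp (-(ϰ * |z|) / 2))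
      = (∫⁻ z in Ici (0:ℝ), ENNReal.ofReal (c * Real.exp (-(ϰ * |z|) / 2)))
        + ∫⁻ z in (Ici (0:ℝ))ᶜ, ENNReal.ofReal (c * Real.exp (-(ϰ * |z|) / 2)) :=
        (lintegral_add_compl _ measurableSet_Ici).symm
    _ ≤ ENNReal.ofReal (2 * c / ϰ) + ENNReal.ofReal (2 * c / ϰ) := by
        rw [compl_Ici]; exact add_le_add hIci hIio
    _ = ENNReal.ofReal (4 * c / ϰ) := by
        rw [← ENNReal.ofReal_add (by positivity) (by positivity)]
        congr 1
        ring

lemma schur {G F : ℝ → ℝ≥0∞} (hG : Measurable G) (hGe : ∀ z, G (-z) = G z)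
    (hF : Measurable F) (hA : (∫⁻ z, G z) ≠ ∞) {p : ℝ} (hp : 1 ≤ p) :
    ∫⁻ x, (∫⁻ y, G (x - y) * F y) ^ p
      ≤ (∫⁻ z, G z) ^ p * ∫⁻ y, F y ^ p := by
  set A := ∫⁻ z, G z with hAdef
  have hGy : ∀ x : ℝ, ∫⁻ y, G (x - y) = A := fun x => lintegral_shift G hGe x
  have hGx : ∀ y : ℝ, ∫⁻ x, G (x - y) = A := fun y => lintegral_sub_right_eq_self G y
  have hGm : ∀ x : ℝ, Measurable fun y => G (x - y) :=
    fun x => hG.comp (measurable_const.sub measurable_id)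
  have hGm' : ∀ y : ℝ, Measurable fun x => G (x - y) :=
    fun y => hG.comp (measurable_id.sub measurable_const)
  rcases eq_or_lt_of_le hp with rfl | hp1
  · simp only [ENNReal.rpow_one]
    refine le_of_eq ?_
    have hmeas : Measurable (Function.uncurry fun x y : ℝ => G (x - y) * F y) :=
      (hG.comp (measurable_fst.sub measurable_snd)).mul (hF.comp measurable_snd)
    calc ∫⁻ x, ∫⁻ y, G (x - y) * F y
        = ∫⁻ y, ∫⁻ x, G (x - y) * F y := lintegral_lintegral_swap hmeas.aemeasurable
      _ = ∫⁻ y, A * F y := by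
          refine lintegral_congr fun y => ?_
          rw [lintegral_mul_const _ (hGm' y), hGx y, mul_comm]
      _ = A * ∫⁻ y, F y := lintegral_const_mul A hF
  · set q := p.conjExponent with hq
    have hpq : p.HolderConjugate q := Real.HolderConjugate.conjExponent hp1
    have hp0 : 0 < p := by linarith
    have hq0 : 0 < q := hpq.symm.pos
    have hsum : 1 / p + 1 / q = 1 := by
      rw [one_div, one_div]; exact hpq.inv_add_inv_eq_one
    have hpq1 : p / q + 1 = p := by
      have hq' : q = p / (p - 1) := rfl
      have hps : p - 1 ≠ 0 := by intro h; exact absurd (by linarith : p = 1) (by linarith)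
      rw [hq', div_div_eq_mul_div, mul_comm, mul_div_assoc, div_self hp0.ne', mul_one]
      ring
    have step2 : ∀ x : ℝ, (∫⁻ y, G (x - y) * F y)
        ≤ (∫⁻ y, G (x - y) * F y ^ p) ^ (1 / p) * A ^ (1 / q) := by
      intro x
      have hf1 : AEMeasurable (fun y => G (x - y) ^ (1 / p) * F y) volume :=
        (((hGm x).pow_const _).mul hF).aemeasurable
      have hg1 : AEMeasurable (fun y => G (x - y) ^ (1 / q)) volume :=
        ((hGm x).pow_const _).aemeasurable
      have H := ENNReal.lintegral_mul_le_Lp_mul_Lq volume hpq hf1 hg1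
      calc ∫⁻ y, G (x - y) * F y
          = ∫⁻ y, (G (x - y) ^ (1 / p) * F y) * G (x - y) ^ (1 / q) := by
            refine lintegral_congr fun y => ?_
            rw [mul_right_comm,
              ← ENNReal.rpow_add_of_nonneg (1 / p) (1 / q) (by positivity) (by positivity),
              hsum, ENNReal.rpow_one]
        _ ≤ (∫⁻ y, (G (x - y) ^ (1 / p) * F y) ^ p) ^ (1 / p)
            * (∫⁻ y, (G (x - y) ^ (1 / q)) ^ q) ^ (1 / q) := H
        _ = (∫⁻ y, G (x - y) * F y ^ p) ^ (1 / p) * A ^ (1 / q) := by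
            congr 1
            · congr 1
              refine lintegral_congr fun y => ?_
              rw [ENNReal.mul_rpow_of_nonneg _ _ hp0.le, ← ENNReal.rpow_mul,
                one_div_mul_cancel hp0.ne', ENNReal.rpow_one]
            · rw [show (∫⁻ y, (G (x - y) ^ (1 / q)) ^ q) = A from ?_]
              rw [← hGy x]
              refine lintegral_congr fun y => ?_
              rw [← ENNReal.rpow_mul, one_div_mul_cancel hq0.ne', ENNReal.rpow_one]
    have step3 : ∀ x : ℝ, (∫⁻ y, G (x - y) * F y) ^ p
        ≤ A ^ (p / q) * ∫⁻ y, G (x - y) * F y ^ p := by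
      intro x
      calc (∫⁻ y, G (x - y) * F y) ^ p
          ≤ ((∫⁻ y, G (x - y) * F y ^ p) ^ (1 / p) * A ^ (1 / q)) ^ p :=
            ENNReal.rpow_le_rpow (step2 x) hp0.le
        _ = A ^ (p / q) * ∫⁻ y, G (x - y) * F y ^ p := by
            rw [ENNReal.mul_rpow_of_nonneg _ _ hp0.le, ← ENNReal.rpow_mul, ← ENNReal.rpow_mul,
              one_div_mul_cancel hp0.ne', ENNReal.rpow_one, mul_comm]
            congr 2
            ring
    have hApq : A ^ (p / q) ≠ ∞ := ENNReal.rpow_ne_top_of_nonneg (by positivity) hA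
    have hmeas2 : Measurable (Function.uncurry fun x y : ℝ => G (x - y) * F y ^ p) :=
      (hG.comp (measurable_fst.sub measurable_snd)).mul ((hF.pow_const p).comp measurable_snd)
    calc ∫⁻ x, (∫⁻ y, G (x - y) * F y) ^ p
        ≤ ∫⁻ x, A ^ (p / q) * ∫⁻ y, G (x - y) * F y ^ p := lintegral_mono step3
      _ = A ^ (p / q) * ∫⁻ x, ∫⁻ y, G (x - y) * F y ^ p := lintegral_const_mul' _ _ hApq
      _ = A ^ (p / q) * ∫⁻ y, ∫⁻ x, G (x - y) * F y ^ p := by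
          rw [lintegral_lintegral_swap hmeas2.aemeasurable]
      _ = A ^ (p / q) * (A * ∫⁻ y, F y ^ p) := by
          congr 1
          calc ∫⁻ y, ∫⁻ x, G (x - y) * F y ^ p
              = ∫⁻ y, A * F y ^ p := by
                refine lintegral_congr fun y => ?_
                rw [lintegral_mul_const _ (hGm' y), hGx y, mul_comm]
            _ = A * ∫⁻ y, F y ^ p := lintegral_const_mul A (hF.pow_const p)
      _ = A ^ p * ∫⁻ y, F y ^ p := by
          rw [← mul_assoc]
          congr 1
          calc A ^ (p / q) * A = A ^ (p / q) * A ^ (1:ℝ) := by rw [ENNReal.rpow_one]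
            _ = A ^ (p / q + 1) :=
              (ENNReal.rpow_add_of_nonneg _ _ (by positivity) zero_le_one).symm
            _ = A ^ p := by rw [hpq1]

noncomputable def Gker (ϰ z : ℝ) : ℝ≥0∞ := ENNReal.ofReal (2 ^ 26 * Real.exp (-(ϰ * |z|) / 2))

lemma Gker_apply (ϰ z : ℝ) : Gker ϰ z = ENNReal.ofReal (2 ^ 26 * Real.exp (-(ϰ * |z|) / 2)) := rfl

lemma Gker_even (ϰ : ℝ) : ∀ z, Gker ϰ (-z) = Gker ϰ z := by
  intro z; simp only [Gker_apply, abs_neg]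

lemma Gker_meas (ϰ : ℝ) : Measurable (Gker ϰ) :=
  (continuous_const.mul (Real.continuous_exp.comp
    (((continuous_const.mul continuous_abs).neg).div_const 2))).measurable.ennreal_ofReal

lemma Gker_lint_le {ϰ : ℝ} (hϰ : 1 ≤ ϰ) :
    ∫⁻ z, Gker ϰ z ≤ ENNReal.ofReal (2 ^ 28 / ϰ) := by
  have h := lintegral_G_le hϰ (c := 2 ^ 26) (by norm_num)
  simp only [Gker_apply]
  refine h.trans (le_of_eq ?_)
  norm_num

lemma sqrt_sech_pos (t : ℝ) : 0 < Real.sqrt (1 / Real.cosh t) :=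
  Real.sqrt_pos.mpr (one_div_pos.mpr (Real.cosh_pos t))

lemma hpt {ϰ : ℝ} (hϰ : 1 ≤ ϰ) (μ : ℝ) {ℓ : ℤ} (hl : |ℓ| ≤ 24) (f : ℝ → ℂ) (x : ℝ) :
    (‖((Real.sqrt (1 / Real.cosh ((x - μ) / 99)) ^ ℓ : ℝ) : ℂ)
        * ∫ y in Set.Ioi x,
            ((Real.exp (ϰ * (x - y))
                * Real.sqrt (1 / Real.cosh ((y - μ) / 99)) ^ (-ℓ) : ℝ) : ℂ) * f y‖₊ : ℝ≥0∞)
      ≤ ∫⁻ y, Gker ϰ (x - y) * (‖f y‖₊ : ℝ≥0∞) := by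
  have hu : 0 < Real.sqrt (1 / Real.cosh ((x - μ) / 99)) ^ ℓ :=
    zpow_pos (sqrt_sech_pos _) ℓ
  calc (‖((Real.sqrt (1 / Real.cosh ((x - μ) / 99)) ^ ℓ : ℝ) : ℂ)
        * ∫ y in Set.Ioi x,
            ((Real.exp (ϰ * (x - y))
                * Real.sqrt (1 / Real.cosh ((y - μ) / 99)) ^ (-ℓ) : ℝ) : ℂ) * f y‖₊ : ℝ≥0∞)
      = ENNReal.ofReal (Real.sqrt (1 / Real.cosh ((x - μ) / 99)) ^ ℓ)
        * (‖∫ y in Set.Ioi x,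
            ((Real.exp (ϰ * (x - y))
                * Real.sqrt (1 / Real.cosh ((y - μ) / 99)) ^ (-ℓ) : ℝ) : ℂ) * f y‖₊ : ℝ≥0∞) := by
        rw [nnnorm_mul, ENNReal.coe_mul, Complex.nnnorm_real, ← enorm_eq_nnnorm (_ : ℝ), Real.enorm_eq_ofReal hu.le]
    _ ≤ ENNReal.ofReal (Real.sqrt (1 / Real.cosh ((x - μ) / 99)) ^ ℓ)
        * ∫⁻ y in Set.Ioi x,
            (‖((Real.exp (ϰ * (x - y))
                * Real.sqrt (1 / Real.cosh ((y - μ) / 99)) ^ (-ℓ) : ℝ) : ℂ) * f y‖₊ : ℝ≥0∞) :=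
        mul_le_mul_right (enorm_integral_le_lintegral_enorm _) _
    _ = ∫⁻ y in Set.Ioi x,
          ENNReal.ofReal (Real.sqrt (1 / Real.cosh ((x - μ) / 99)) ^ ℓ)
            * (‖((Real.exp (ϰ * (x - y))
                * Real.sqrt (1 / Real.cosh ((y - μ) / 99)) ^ (-ℓ) : ℝ) : ℂ) * f y‖₊ : ℝ≥0∞) :=
        (lintegral_const_mul' _ _ ENNReal.ofReal_ne_top).symm
    _ ≤ ∫⁻ y, Gker ϰ (x - y) * (‖f y‖₊ : ℝ≥0∞) := by
        rw [← lintegral_indicator measurableSet_Ioi]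
        refine lintegral_mono fun y => ?_
        by_cases hy : y ∈ Set.Ioi x
        · rw [Set.indicator_of_mem hy]
          have hxy : x < y := hy
          have hv : 0 < Real.sqrt (1 / Real.cosh ((y - μ) / 99)) ^ (-ℓ) :=
            zpow_pos (sqrt_sech_pos _) _
          have hk0 : 0 ≤ Real.exp (ϰ * (x - y))
              * Real.sqrt (1 / Real.cosh ((y - μ) / 99)) ^ (-ℓ) :=
            (mul_pos (Real.exp_pos _) hv).le
          rw [nnnorm_mul, ENNReal.coe_mul, Complex.nnnorm_real,
            ← enorm_eq_nnnorm (_ : ℝ), Real.enorm_eq_ofReal hk0, ← mul_assoc, ← ENNReal.ofReal_mul hu.le]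
          refine mul_le_mul_left ?_ _
          rw [Gker_apply]
          refine ENNReal.ofReal_le_ofReal ?_
          rw [mul_comm (Real.exp (ϰ * (x - y))), ← mul_assoc]
          exact kernel_le hϰ μ hl hxy
        · rw [Set.indicator_of_notMem hy]
          exact zero_le

lemma part2 {ϰ : ℝ} (hϰ : 1 ≤ ϰ) (μ : ℝ) {ℓ : ℤ} (hl : |ℓ| ≤ 24) (p : ℝ≥0∞) (hp : 1 ≤ p)
    (f : ℝ → ℂ) (hf : MemLp f p (volume : Measure ℝ)) :
    eLpNorm
        (fun x =>
          ((Real.sqrt (1 / Real.cosh ((x - μ) / 99)) ^ ℓ : ℝ) : ℂ)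
            * ∫ y in Set.Ioi x,
                ((Real.exp (ϰ * (x - y))
                    * Real.sqrt (1 / Real.cosh ((y - μ) / 99)) ^ (-ℓ) : ℝ) : ℂ)
                  * f y)
        p (volume : Measure ℝ)
      ≤ ENNReal.ofReal (2 ^ 28 / ϰ) * eLpNorm f p (volume : Measure ℝ) := by
  obtain ⟨f', hf'meas, hff'⟩ : ∃ f' : ℝ → ℂ, StronglyMeasurable f' ∧ f =ᵐ[volume] f' :=
    ⟨hf.1.mk f, hf.1.stronglyMeasurable_mk, hf.1.ae_eq_mk⟩
  have hFmeas : Measurable fun y => (‖f' y‖₊ : ℝ≥0∞) := hf'meas.measurable.enorm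
  have hA := Gker_lint_le hϰ
  have hAne : (∫⁻ z, Gker ϰ z) ≠ ∞ := (lt_of_le_of_lt hA ENNReal.ofReal_lt_top).ne
  have hpt' : ∀ x : ℝ,
      (‖((Real.sqrt (1 / Real.cosh ((x - μ) / 99)) ^ ℓ : ℝ) : ℂ)
          * ∫ y in Set.Ioi x,
              ((Real.exp (ϰ * (x - y))
                  * Real.sqrt (1 / Real.cosh ((y - μ) / 99)) ^ (-ℓ) : ℝ) : ℂ) * f y‖₊ : ℝ≥0∞)
        ≤ ∫⁻ y, Gker ϰ (x - y) * (‖f' y‖₊ : ℝ≥0∞) := by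
    intro x
    refine (hpt hϰ μ hl f x).trans (le_of_eq ?_)
    exact lintegral_congr_ae (hff'.mono fun y hy => by dsimp only; rw [hy])
  rcases eq_or_ne p ∞ with rfl | hptop
  · rw [eLpNorm_exponent_top, eLpNorm_exponent_top]
    have hbd : ∀ x : ℝ,
        (‖((Real.sqrt (1 / Real.cosh ((x - μ) / 99)) ^ ℓ : ℝ) : ℂ)
            * ∫ y in Set.Ioi x,
                ((Real.exp (ϰ * (x - y))
                    * Real.sqrt (1 / Real.cosh ((y - μ) / 99)) ^ (-ℓ) : ℝ) : ℂ) * f y‖₊ : ℝ≥0∞)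
          ≤ (∫⁻ z, Gker ϰ z) * eLpNormEssSup f volume := by
      intro x
      refine (hpt' x).trans ?_
      have h1 : (∫⁻ y, Gker ϰ (x - y) * (‖f' y‖₊ : ℝ≥0∞))
          ≤ ∫⁻ y, Gker ϰ (x - y) * eLpNormEssSup f' volume := by
        refine lintegral_mono_ae ?_
        filter_upwards [ae_le_essSup (f := fun y : ℝ => (‖f' y‖₊ : ℝ≥0∞))] with y hy
        exact mul_le_mul_right hy _
      refine h1.trans (le_of_eq ?_)
      rw [lintegral_mul_const _ (show Measurable fun y : ℝ => Gker ϰ (x - y) from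
          (Gker_meas ϰ).comp (measurable_const.sub measurable_id)),
        lintegral_shift _ (Gker_even ϰ) x, eLpNormEssSup_congr_ae hff'.symm]
    refine le_trans (essSup_le_of_ae_le _ (ae_of_all _ hbd)) ?_
    exact mul_le_mul_left hA _
  · have hp0 : p ≠ 0 := (lt_of_lt_of_le zero_lt_one hp).ne'
    have hpR1 : 1 ≤ p.toReal := by
      rw [← ENNReal.toReal_one]
      exact ENNReal.toReal_mono hptop hp
    have hpR0 : 0 < p.toReal := by linarith
    rw [eLpNorm_eq_lintegral_rpow_enorm_toReal hp0 hptop, eLpNorm_eq_lintegral_rpow_enorm_toReal hp0 hptop]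
    calc (∫⁻ x, (‖((Real.sqrt (1 / Real.cosh ((x - μ) / 99)) ^ ℓ : ℝ) : ℂ)
            * ∫ y in Set.Ioi x,
                ((Real.exp (ϰ * (x - y))
                    * Real.sqrt (1 / Real.cosh ((y - μ) / 99)) ^ (-ℓ) : ℝ) : ℂ)
                  * f y‖₊ : ℝ≥0∞) ^ p.toReal) ^ (1 / p.toReal)
        ≤ (∫⁻ x, (∫⁻ y, Gker ϰ (x - y) * (‖f' y‖₊ : ℝ≥0∞)) ^ p.toReal) ^ (1 / p.toReal) := by
          refine ENNReal.rpow_le_rpow ?_ (by positivity)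
          exact lintegral_mono fun x => ENNReal.rpow_le_rpow (hpt' x) hpR0.le
      _ ≤ ((∫⁻ z, Gker ϰ z) ^ p.toReal
            * ∫⁻ y, ((‖f' y‖₊ : ℝ≥0∞)) ^ p.toReal) ^ (1 / p.toReal) :=
          ENNReal.rpow_le_rpow
            (schur (Gker_meas ϰ) (Gker_even ϰ) hFmeas hAne hpR1) (by positivity)
      _ = (∫⁻ z, Gker ϰ z) * (∫⁻ y, ((‖f' y‖₊ : ℝ≥0∞)) ^ p.toReal) ^ (1 / p.toReal) := by
          rw [ENNReal.mul_rpow_of_nonneg _ _ (by positivity), ← ENNReal.rpow_mul,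
            mul_one_div_cancel hpR0.ne', ENNReal.rpow_one]
      _ ≤ ENNReal.ofReal (2 ^ 28 / ϰ)
            * (∫⁻ y, ((‖f y‖₊ : ℝ≥0∞)) ^ p.toReal) ^ (1 / p.toReal) := by
          have heq : (∫⁻ y, ((‖f' y‖₊ : ℝ≥0∞)) ^ p.toReal)
              = ∫⁻ y, ((‖f y‖₊ : ℝ≥0∞)) ^ p.toReal :=
            lintegral_congr_ae (hff'.mono fun y hy => by dsimp only; rw [hy])
          rw [heq]
          exact mul_le_mul_left hA _

end Stmt15Aux

open MeasureTheory

/-- **Conjugated resolvent bounds.** With `ψ(x) = √(sech(x/99))`, there is an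
absolute constant `C` so that for all `ϰ ≥ 1`, `μ ∈ ℝ`, and integer `|ℓ| ≤ 24`:
(i) the kernel `K(x,y) = ψ(x-μ)^ℓ ψ(y-μ)^{-ℓ} e^{ϰ(x-y)} 𝟙_{x<y}` satisfies
`|K(x,y)| ≤ C e^{-ϰ|x-y|/2}`; (ii) for all `p ∈ [1,∞]` and `f ∈ L^p`, the operator
`Tf(x) = ψ(x-μ)^ℓ ∫_x^∞ e^{ϰ(x-y)} ψ(y-μ)^{-ℓ} f(y) dy` satisfies
`‖Tf‖_{L^p} ≤ C ϰ^{-1} ‖f‖_{L^p}`. -/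
theorem stmt_15 :
    ∃ C : ℝ, 0 < C ∧
      ∀ ϰ : ℝ, 1 ≤ ϰ → ∀ μ : ℝ, ∀ ℓ : ℤ, |ℓ| ≤ 24 →
        (∀ x y : ℝ,
          |Real.sqrt (1 / Real.cosh ((x - μ) / 99)) ^ ℓ
              * Real.sqrt (1 / Real.cosh ((y - μ) / 99)) ^ (-ℓ)
              * Real.exp (ϰ * (x - y)) * (if x < y then (1 : ℝ) else 0)|
            ≤ C * Real.exp (-(ϰ * |x - y|) / 2)) ∧
        (∀ p : ENNReal, 1 ≤ p → ∀ f : ℝ → ℂ, MemLp f p (volume : Measure ℝ) →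
          eLpNorm
              (fun x =>
                ((Real.sqrt (1 / Real.cosh ((x - μ) / 99)) ^ ℓ : ℝ) : ℂ)
                  * ∫ y in Set.Ioi x,
                      ((Real.exp (ϰ * (x - y))
                          * Real.sqrt (1 / Real.cosh ((y - μ) / 99)) ^ (-ℓ) : ℝ) : ℂ)
                        * f y)
              p (volume : Measure ℝ)
            ≤ ENNReal.ofReal (C / ϰ) * eLpNorm f p (volume : Measure ℝ)) := by
  refine ⟨2 ^ 28, by norm_num, ?_⟩
  intro ϰ hϰ μ ℓ hl
  constructor
  · intro x y
    by_cases hxy : x < y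
    · rw [if_pos hxy, mul_one]
      have hu : 0 < Real.sqrt (1 / Real.cosh ((x - μ) / 99)) ^ ℓ :=
        zpow_pos (Stmt15Aux.sqrt_sech_pos _) ℓ
      have hv : 0 < Real.sqrt (1 / Real.cosh ((y - μ) / 99)) ^ (-ℓ) :=
        zpow_pos (Stmt15Aux.sqrt_sech_pos _) _
      have hnn : 0 ≤ Real.sqrt (1 / Real.cosh ((x - μ) / 99)) ^ ℓ
          * Real.sqrt (1 / Real.cosh ((y - μ) / 99)) ^ (-ℓ) * Real.exp (ϰ * (x - y)) := by
        positivity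
      rw [abs_of_nonneg hnn]
      refine (Stmt15Aux.kernel_le hϰ μ hl hxy).trans ?_
      have := Real.exp_pos (-(ϰ * |x - y|) / 2)
      nlinarith
    · rw [if_neg hxy, mul_zero, abs_zero]
      positivity
  · intro p hp f hf
    exact Stmt15Aux.part2 hϰ μ hl p hp f hf
end
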